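/- arXiv:1801.03602 — 7 statements merged into one kernel-verified Lean document; each statement's English description precedes it below -/
import Mathlib

section
/- Let 1 ≤ k_1 < k_2 < ... < k_s be fixed integers and let r = ⌊log_2(k_s)⌋ + 1. Then the exponential sum over F_2 of the symmetric Boolean function e_{n,[k_1,...,k_s]} = e_{n,k_1} ⊕ ... ⊕ e_{n,k_s} satisfies S(e_{n,[k_1,...,k_s]}) = c_0(k_1,...,k_s)·2^n + Σ_{j=1}^{2^r−1} c_j(k_1,...,k_s)·(1+ζ_j)^n, where ζ_j = e^{πij/2^{r−1}}, i = √−1, and c_j(k_1,...,k_s) = (1/2^r) Σ_{t=0}^{2^r−1} (−1)^{C(t,k_1)+...+C(t,k_s)} ζ_j^{−t}. -/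
noncomputable section

/-- Evaluation of the elementary symmetric polynomial in `n` variables of degree `k`. -/
def esymmVal {R : Type*} [CommRing R] (n k : ℕ) (x : Fin n → R) : R :=
  ∑ s ∈ Finset.powersetCard k Finset.univ, ∏ i ∈ s, x i

private lemma neg_one_pow_mod (a : ℕ) : (-1:ℂ)^a = (-1)^(a % 2) := by
  conv_lhs => rw [← Nat.div_add_mod a 2, pow_add, pow_mul]
  simp

private lemma neg_one_congr {a b : ℕ} (h : a % 2 = b % 2) : (-1:ℂ)^a = (-1)^b := by
  rw [neg_one_pow_mod a, neg_one_pow_mod b, h]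

private lemma choose_add_pow_two (r w m : ℕ) (hm : m < 2^r) :
    (((w + 2^r).choose m : ℕ) : ZMod 2) = ((w.choose m : ℕ) : ZMod 2) := by
  rw [Nat.add_choose_eq, Nat.cast_sum]
  rw [Finset.sum_eq_single (m, 0)]
  · simp
  · rintro ⟨i, j⟩ hij hne
    rw [Finset.HasAntidiagonal.mem_antidiagonal] at hij
    have hj0 : j ≠ 0 := by
      rintro rfl; exact hne (by simp [← hij])
    have hj : j ≠ 2^r := by
      rintro rfl; omega
    have h2 : (2:ℕ) ∣ (2^r).choose j := Nat.Prime.dvd_choose_pow Nat.prime_two hj0 hj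
    push_cast
    rw [(ZMod.natCast_eq_zero_iff _ 2).2 h2]
    ring
  · intro h
    simp [Finset.HasAntidiagonal.mem_antidiagonal] at h

private lemma choose_mod_period (r w m : ℕ) (hm : m < 2^r) :
    ((w.choose m : ℕ) : ZMod 2) = (((w % 2^r).choose m : ℕ) : ZMod 2) := by
  conv_lhs => rw [← Nat.mod_add_div w (2^r)]
  induction (w / 2^r) with
  | zero => simp
  | succ q ih =>
      rw [Nat.mul_succ, ← add_assoc, choose_add_pow_two r _ m hm, ih]

private lemma orth (N : ℕ) (hN : 0 < N) (m : ℤ) :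
    ∑ j ∈ Finset.range N, (Complex.exp (2 * Real.pi * Complex.I / N) ^ m) ^ j =
      if (N:ℤ) ∣ m then (N:ℂ) else 0 := by
  have hprim : IsPrimitiveRoot (Complex.exp (2 * Real.pi * Complex.I / N)) N :=
    Complex.isPrimitiveRoot_exp N hN.ne'
  set ω := Complex.exp (2 * Real.pi * Complex.I / N)
  by_cases hdvd : (N:ℤ) ∣ m
  · rw [if_pos hdvd, (hprim.zpow_eq_one_iff_dvd m).2 hdvd]
    simp
  · rw [if_neg hdvd]
    have h1 : ω ^ m ≠ 1 := fun h => hdvd ((hprim.zpow_eq_one_iff_dvd m).1 h)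
    have hN1 : (ω ^ m) ^ N = 1 := by
      rw [← zpow_natCast (ω ^ m) N, ← zpow_mul, mul_comm, zpow_mul, zpow_natCast,
        hprim.pow_eq_one, one_zpow]
    rw [geom_sum_eq h1, hN1, sub_self, zero_div]

private lemma esymmVal_eq (n m : ℕ) (x : Fin n → ZMod 2) :
    esymmVal n m x = ((Finset.univ.filter (fun i => x i = 1)).card.choose m : ZMod 2) := by
  classical
  set A := Finset.univ.filter (fun i => x i = 1) with hA
  have hprod : ∀ t ∈ Finset.powersetCard m (Finset.univ : Finset (Fin n)),
      (∏ i ∈ t, x i) = if t ⊆ A then 1 else 0 := by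
    intro t _
    by_cases h : t ⊆ A
    · rw [if_pos h]
      exact Finset.prod_eq_one fun i hi => (Finset.mem_filter.1 (h hi)).2
    · rw [if_neg h]
      obtain ⟨i, hi, hni⟩ := Finset.not_subset.1 h
      have hx0 : x i = 0 := by
        have := (by decide : ∀ a : ZMod 2, a = 0 ∨ a = 1) (x i)
        rcases this with h0 | h1
        · exact h0
        · exact absurd (Finset.mem_filter.2 ⟨Finset.mem_univ i, h1⟩) hni
      exact Finset.prod_eq_zero hi hx0
  rw [esymmVal, Finset.sum_congr rfl hprod, Finset.sum_boole]
  congr 1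
  have : (Finset.powersetCard m (Finset.univ : Finset (Fin n))).filter (fun t => t ⊆ A)
      = Finset.powersetCard m A := by
    ext t
    simp only [Finset.mem_filter, Finset.mem_powersetCard, Finset.subset_univ, true_and]
    tauto
  rw [this, Finset.card_powersetCard]

private lemma sum_over_cube (n : ℕ) (F : Finset (Fin n) → ℂ) :
    (∑ x : Fin n → ZMod 2, F (Finset.univ.filter (fun i => x i = 1)))
      = ∑ S : Finset (Fin n), F S := by
  classical
  apply Fintype.sum_bijective (fun x : Fin n → ZMod 2 => Finset.univ.filter (fun i => x i = 1))
  · apply Function.bijective_iff_has_inverse.2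
    refine ⟨fun S i => if i ∈ S then 1 else 0, ?_, ?_⟩
    · intro x
      funext i
      have := (by decide : ∀ a : ZMod 2, a = 0 ∨ a = 1) (x i)
      rcases this with h | h <;> simp [h]
    · intro S
      ext i
      simp only [Finset.mem_filter, Finset.mem_univ, true_and]
      split_ifs with h <;> simp [h]
  · intro x
    rfl

private def fsum (s : ℕ) (k : Fin s → ℕ) (t : ℕ) : ℕ := ∑ i, Nat.choose t (k i)

/-- Cai–Green–Thierauf closed formula for exponential sums of symmetric Boolean functions. -/
theorem stmt0 (s : ℕ) (hs : 0 < s) (k : Fin s → ℕ)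
    (hk1 : ∀ i, 1 ≤ k i) (hmono : StrictMono k) (n : ℕ)
    (r : ℕ) (hr : r = Nat.log 2 (k ⟨s - 1, by omega⟩) + 1)
    (ζ : ℕ → ℂ)
    (hζ : ∀ j, ζ j = Complex.exp ((Real.pi : ℂ) * Complex.I * j / 2 ^ (r - 1)))
    (c : ℕ → ℂ)
    (hc : ∀ j, c j = (1 / 2 ^ r) *
      ∑ t ∈ Finset.range (2 ^ r),
        (-1 : ℂ) ^ (∑ i, Nat.choose t (k i)) * ζ j ^ (-(t : ℤ))) :
    (∑ x : Fin n → ZMod 2, (-1 : ℂ) ^ (∑ i, esymmVal n (k i) x).val)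
      = c 0 * 2 ^ n + ∑ j ∈ Finset.Ico 1 (2 ^ r), c j * (1 + ζ j) ^ n := by
  classical
  have hr1 : 1 ≤ r := by omega
  set N := 2 ^ r with hN
  have hN0 : 0 < N := Nat.pow_pos (n := r) (by norm_num)
  have hNC : (N:ℂ) ≠ 0 := Nat.cast_ne_zero.2 hN0.ne'
  have hNcast : ((N:ℕ) : ℂ) = (2:ℂ) ^ r := by rw [hN]; push_cast; ring
  have h2r : (2:ℂ) ^ r = 2 * 2 ^ (r-1) := by
    conv_lhs => rw [show r = (r-1) + 1 by omega]
    rw [pow_succ]; ring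
  have hkN : ∀ i, k i < N := by
    intro i
    have h1 : k i ≤ k ⟨s-1, by omega⟩ := by
      apply hmono.monotone
      rw [Fin.le_def]
      have := i.2
      simp only []
      omega
    have h2 : k ⟨s-1, by omega⟩ < 2 ^ (Nat.log 2 (k ⟨s-1, by omega⟩) + 1) :=
      Nat.lt_pow_succ_log_self (by norm_num) _
    rw [hN, hr]
    omega
  set ω := Complex.exp (2 * Real.pi * Complex.I / N) with hω
  have hωne : ω ≠ 0 := Complex.exp_ne_zero _
  have hζω : ∀ j : ℕ, ζ j = ω ^ (j:ℤ) := by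
    intro j
    rw [hζ, hω, show ((j:ℤ)) = ((j:ℕ):ℤ) from rfl, zpow_natCast, ← Complex.exp_nat_mul]
    congr 1
    rw [hNcast, h2r]
    have h1 : (2:ℂ) ^ (r-1) ≠ 0 := pow_ne_zero _ two_ne_zero
    field_simp
  -- periodicity of the sign
  have hper : ∀ w, (-1:ℂ) ^ (fsum s k w) = (-1:ℂ) ^ (fsum s k (w % N)) := by
    intro w
    apply neg_one_congr
    have h3 : ((fsum s k w : ℕ) : ZMod 2) = ((fsum s k (w % N) : ℕ) : ZMod 2) := by
      simp only [fsum, Nat.cast_sum]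
      exact Finset.sum_congr rfl fun i _ => choose_mod_period r w (k i) (hkN i)
    exact (ZMod.natCast_eq_natCast_iff' _ _ _).1 h3
  -- inverse DFT step
  have hdft : ∀ w : ℕ, ∑ j ∈ Finset.range N, c j * ζ j ^ w = (-1:ℂ) ^ (fsum s k w) := by
    intro w
    have hkey : ∀ j t : ℕ, ζ j ^ (-(t:ℤ)) * ζ j ^ w = (ω ^ ((w:ℤ) - t)) ^ j := by
      intro j t
      rw [hζω j, ← zpow_natCast (ω ^ (j:ℤ)) w, ← zpow_add₀ (zpow_ne_zero _ hωne),
        ← zpow_mul, show ((j:ℤ) * (-(t:ℤ) + (w:ℕ))) = ((w:ℤ) - t) * j by push_cast; ring,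
        zpow_mul, zpow_natCast]
    have expand : ∀ j, c j * ζ j ^ w
        = ∑ t ∈ Finset.range N, (1/(N:ℂ)) * ((-1:ℂ)^(fsum s k t) * (ω ^ ((w:ℤ) - t)) ^ j) := by
      intro j
      rw [hc j, ← hNcast, Finset.mul_sum, Finset.sum_mul]
      refine Finset.sum_congr rfl fun t _ => ?_
      rw [show (1/(N:ℂ)) * ((-1:ℂ) ^ (∑ i, Nat.choose t (k i)) * ζ j ^ (-(t:ℤ))) * ζ j ^ w
        = (1/(N:ℂ)) * ((-1:ℂ) ^ (∑ i, Nat.choose t (k i)) * (ζ j ^ (-(t:ℤ)) * ζ j ^ w)) by ring,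
        hkey j t]
      rfl
    calc ∑ j ∈ Finset.range N, c j * ζ j ^ w
        = ∑ j ∈ Finset.range N, ∑ t ∈ Finset.range N,
            (1/(N:ℂ)) * ((-1:ℂ)^(fsum s k t) * (ω ^ ((w:ℤ) - t)) ^ j) :=
          Finset.sum_congr rfl fun j _ => expand j
      _ = ∑ t ∈ Finset.range N, (1/(N:ℂ)) * ((-1:ℂ)^(fsum s k t) *
            ∑ j ∈ Finset.range N, (ω ^ ((w:ℤ) - t)) ^ j) := by
          rw [Finset.sum_comm]
          exact Finset.sum_congr rfl fun t _ => by rw [Finset.mul_sum, Finset.mul_sum]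
      _ = ∑ t ∈ Finset.range N, (1/(N:ℂ)) * ((-1:ℂ)^(fsum s k t) *
            (if (N:ℤ) ∣ ((w:ℤ) - t) then (N:ℂ) else 0)) := by
          refine Finset.sum_congr rfl fun t _ => ?_
          rw [orth N hN0 ((w:ℤ) - t)]
      _ = (-1:ℂ) ^ (fsum s k w) := by
          rw [Finset.sum_eq_single (w % N)]
          · have hdvd : (N:ℤ) ∣ ((w:ℤ) - (w % N : ℕ)) := by
              refine ⟨(w / N : ℕ), ?_⟩
              have h8 : (N:ℤ) * ((w/N : ℕ):ℤ) + ((w%N:ℕ):ℤ) = (w:ℤ) := by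
                exact_mod_cast Nat.div_add_mod w N
              linarith
            rw [if_pos hdvd, hper w, mul_comm ((-1:ℂ) ^ fsum s k (w % N)) (N:ℂ), ← mul_assoc,
              one_div, inv_mul_cancel₀ hNC, one_mul]
          · intro t ht hne
            rw [Finset.mem_range] at ht
            rw [if_neg, mul_zero, mul_zero]
            intro hdvd
            apply hne
            have h4 : (t:ℤ) % N = (w:ℤ) % N := by
              obtain ⟨q, hq⟩ := hdvd
              have h7 : (t:ℤ) = (w:ℤ) - N * q := by linarith
              rw [h7, sub_eq_add_neg, ← mul_neg, Int.add_mul_emod_self_left]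
            have h5 : (t:ℤ) % N = t := Int.emod_eq_of_lt (by positivity) (by exact_mod_cast ht)
            have h6 : (w:ℤ) % N = ((w % N : ℕ) : ℤ) := (Int.natCast_mod w N).symm
            rw [h5, h6] at h4
            exact_mod_cast h4
          · intro h
            exact absurd (Finset.mem_range.2 (Nat.mod_lt w hN0)) h
  -- step A : group by weight
  have hstepA : (∑ x : Fin n → ZMod 2, (-1 : ℂ) ^ (∑ i, esymmVal n (k i) x).val)
      = ∑ w ∈ Finset.range (n+1), (n.choose w : ℂ) * (-1:ℂ) ^ (fsum s k w) := by
    have h1 : ∀ x : Fin n → ZMod 2,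
        (-1:ℂ) ^ (∑ i, esymmVal n (k i) x).val
          = (-1:ℂ) ^ (fsum s k ((Finset.univ.filter (fun i => x i = 1)).card)) := by
      intro x
      have h2 : (∑ i, esymmVal n (k i) x)
          = ((fsum s k ((Finset.univ.filter (fun i => x i = 1)).card) : ℕ) : ZMod 2) := by
        simp only [fsum, Nat.cast_sum]
        exact Finset.sum_congr rfl fun i _ => esymmVal_eq n (k i) x
      rw [h2, ZMod.val_natCast]
      exact neg_one_congr (Nat.mod_mod_of_dvd _ dvd_rfl)
    calc (∑ x : Fin n → ZMod 2, (-1 : ℂ) ^ (∑ i, esymmVal n (k i) x).val)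
        = ∑ x : Fin n → ZMod 2,
            (-1:ℂ) ^ (fsum s k ((Finset.univ.filter (fun i => x i = 1)).card)) :=
          Finset.sum_congr rfl fun x _ => h1 x
      _ = ∑ S : Finset (Fin n), (-1:ℂ) ^ (fsum s k S.card) :=
          sum_over_cube n (fun S => (-1:ℂ) ^ (fsum s k S.card))
      _ = ∑ S ∈ (Finset.univ : Finset (Fin n)).powerset, (-1:ℂ) ^ (fsum s k S.card) := by
          rw [Finset.powerset_univ]
      _ = ∑ w ∈ Finset.range ((Finset.univ : Finset (Fin n)).card + 1),
            (Finset.univ : Finset (Fin n)).card.choose w • (-1:ℂ) ^ (fsum s k w) :=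
          Finset.sum_powerset_apply_card (fun w => (-1:ℂ) ^ fsum s k w)
      _ = ∑ w ∈ Finset.range (n+1), (n.choose w : ℂ) * (-1:ℂ) ^ (fsum s k w) := by
          simp [Finset.card_univ, nsmul_eq_mul]
  -- binomial theorem
  have hbinom : ∀ j, (1 + ζ j)^n = ∑ w ∈ Finset.range (n+1), ζ j ^ w * (n.choose w : ℂ) := by
    intro j
    rw [add_comm, add_pow]
    exact Finset.sum_congr rfl fun w _ => by rw [one_pow, mul_one]
  have hζ0 : ζ 0 = 1 := by
    rw [hζ]
    simp
  rw [hstepA]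
  calc ∑ w ∈ Finset.range (n+1), (n.choose w : ℂ) * (-1:ℂ) ^ (fsum s k w)
      = ∑ w ∈ Finset.range (n+1), ∑ j ∈ Finset.range N,
          c j * (ζ j ^ w * (n.choose w : ℂ)) := by
        refine Finset.sum_congr rfl fun w _ => ?_
        rw [← hdft w, Finset.mul_sum]
        exact Finset.sum_congr rfl fun j _ => by ring
    _ = ∑ j ∈ Finset.range N, c j * (1 + ζ j)^n := by
        rw [Finset.sum_comm]
        refine Finset.sum_congr rfl fun j _ => ?_
        rw [hbinom j, Finset.mul_sum]
    _ = c 0 * 2 ^ n + ∑ j ∈ Finset.Ico 1 N, c j * (1 + ζ j) ^ n := by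
        rw [Finset.range_eq_Ico, Finset.sum_eq_sum_Ico_succ_bot hN0]
        congr 2
        rw [hζ0]
        norm_num
end
end

section
/- Let n, k be natural numbers with k ≤ n, p a prime, q = p^r for some positive integer r, and let F_q = {0, α_1, ..., α_{q−1}} be the Galois field of q elements. Then S_{F_q}(e_{n,k}) = Σ_{m_1=0}^{n} Σ_{m_2=0}^{n−m_1} ... Σ_{m_{q−1}=0}^{n−m_1−...−m_{q−2}} multinomial(n; m_0*, m_1, ..., m_{q−1}) · exp((2πi/p) · Tr_{F_q/F_p}(Λ_{α_1,...,α_{q−1}}(k, m_1, ..., m_{q−1}))), where m_0* = n − (m_1 + ... + m_{q−1}). -/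
noncomputable section

/-- `Lam l a m k` is the quantity `Λ_{a_1,…,a_l}(k, m_1,…,m_l)`. -/
def Lam {R : Type*} [CommRing R] : (l : ℕ) → (Fin l → R) → (Fin l → ℕ) → ℤ → R
  | 0, _, _, k => if k = 0 then 1 else 0
  | l + 1, a, m, k =>
      ∑ j ∈ Finset.range (m (Fin.last l) + 1),
        (Nat.choose (m (Fin.last l)) j : R) * a (Fin.last l) ^ j *
          Lam l (fun i => a i.castSucc) (fun i => m i.castSucc) (k - j)

open Polynomial Finset

lemma Lam_neg {R : Type*} [CommRing R] :
    ∀ (l : ℕ) (a : Fin l → R) (m : Fin l → ℕ) (k : ℤ), k < 0 → Lam l a m k = 0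
  | 0, _, _, k, hk => by rw [Lam, if_neg (by omega)]
  | l + 1, a, m, k, hk => by
      rw [Lam]
      refine Finset.sum_eq_zero fun j _ => ?_
      rw [Lam_neg l _ _ _ (by omega), mul_zero]

lemma coeff_one_add_C_mul_X_pow {R : Type*} [CommRing R] (a : R) (M j : ℕ) :
    (((1 : R[X]) + C a * X) ^ M).coeff j = (M.choose j : R) * a ^ j := by
  rw [add_comm, add_pow, Polynomial.finset_sum_coeff]
  have hterm : ∀ i, ((C a * X) ^ i * 1 ^ (M - i) * (M.choose i : R[X])).coeff j
      = if j = i then (M.choose i : R) * a ^ i else 0 := by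
    intro i
    rw [one_pow, mul_one, mul_pow, ← C_pow, ← C_eq_natCast, mul_right_comm, ← C_mul,
      coeff_C_mul, coeff_X_pow]
    rcases eq_or_ne j i with h | h
    · simp [h, mul_comm]
    · simp [h]
  simp only [hterm]
  rw [Finset.sum_ite_eq (Finset.range (M + 1)) j fun i => (M.choose i : R) * a ^ i]
  rcases le_or_gt j M with h | h
  · rw [if_pos (Finset.mem_range.mpr (by omega))]
  · rw [if_neg (by simp [Finset.mem_range]; omega), Nat.choose_eq_zero_of_lt h,
      Nat.cast_zero, zero_mul]

lemma coeff_prod_eq_Lam {R : Type*} [CommRing R] :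
    ∀ (l : ℕ) (a : Fin l → R) (m : Fin l → ℕ) (k : ℕ),
    (∏ j : Fin l, ((1 : R[X]) + C (a j) * X) ^ m j).coeff k = Lam l a m (k : ℤ)
  | 0, a, m, k => by
      rw [Lam, Finset.univ_eq_empty, Finset.prod_empty, Polynomial.coeff_one]
      rcases eq_or_ne k 0 with h | h
      · simp [h]
      · rw [if_neg h, if_neg (by exact_mod_cast h)]
  | l + 1, a, m, k => by
      set M := m (Fin.last l) with hM
      set aL := a (Fin.last l) with haL
      set P := ∏ j : Fin l, ((1 : R[X]) + C (a j.castSucc) * X) ^ m j.castSucc with hP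
      have hprod : ∏ j : Fin (l+1), ((1 : R[X]) + C (a j) * X) ^ m j
          = ((1 : R[X]) + C aL * X) ^ M * P := by
        rw [Fin.prod_univ_castSucc, mul_comm]
      rw [hprod, Polynomial.coeff_mul, Finset.Nat.sum_antidiagonal_eq_sum_range_succ_mk, Lam]
      have hterm : ∀ j ∈ Finset.range (k + 1),
          (((1 : R[X]) + C aL * X) ^ M).coeff j * P.coeff (k - j)
            = (M.choose j : R) * aL ^ j *
              Lam l (fun i => a i.castSucc) (fun i => m i.castSucc) ((k : ℤ) - j) := by
        intro j hj
        have hjk : j ≤ k := by simpa [Nat.lt_succ_iff] using hj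
        rw [coeff_one_add_C_mul_X_pow, coeff_prod_eq_Lam l _ _ (k - j)]
        congr 2
        omega
      rw [Finset.sum_congr rfl hterm]
      have h1 : ∑ j ∈ Finset.range (k + 1),
            (M.choose j : R) * aL ^ j *
              Lam l (fun i => a i.castSucc) (fun i => m i.castSucc) ((k : ℤ) - j)
          = ∑ j ∈ Finset.range (k + M + 1),
            (M.choose j : R) * aL ^ j *
              Lam l (fun i => a i.castSucc) (fun i => m i.castSucc) ((k : ℤ) - j) := by
        refine Finset.sum_subset (Finset.range_subset_range.mpr (by omega)) fun j _ hj => ?_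
        have : (k : ℤ) - j < 0 := by
          simp only [Finset.mem_range] at hj; omega
        rw [Lam_neg l _ _ _ this, mul_zero]
      have h2 : ∑ j ∈ Finset.range (M + 1),
            (M.choose j : R) * aL ^ j *
              Lam l (fun i => a i.castSucc) (fun i => m i.castSucc) ((k : ℤ) - j)
          = ∑ j ∈ Finset.range (k + M + 1),
            (M.choose j : R) * aL ^ j *
              Lam l (fun i => a i.castSucc) (fun i => m i.castSucc) ((k : ℤ) - j) := by
        refine Finset.sum_subset (Finset.range_subset_range.mpr (by omega)) fun j _ hj => ?_
        have : M < j := by simp only [Finset.mem_range] at hj; omega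
        rw [Nat.choose_eq_zero_of_lt this, Nat.cast_zero, zero_mul, zero_mul]
      rw [h1, ← h2]

lemma coeff_prod_one_add {K : Type*} [CommRing K] (n k : ℕ) (x : Fin n → K) :
    (∏ i : Fin n, ((1 : K[X]) + C (x i) * X)).coeff k = esymmVal n k x := by
  have h1 : ∏ i : Fin n, ((1 : K[X]) + C (x i) * X)
      = ∑ t ∈ (Finset.univ : Finset (Fin n)).powerset,
          C (∏ i ∈ t, x i) * X ^ t.card := by
    rw [Finset.prod_congr rfl fun i _ => add_comm (1 : K[X]) (C (x i) * X), Finset.prod_add]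
    refine Finset.sum_congr rfl fun t _ => ?_
    rw [Finset.prod_const_one, mul_one, Finset.prod_mul_distrib, Finset.prod_const,
      map_prod]
  rw [h1, Polynomial.finset_sum_coeff]
  have h2 : ∀ t ∈ (Finset.univ : Finset (Fin n)).powerset,
      (C (∏ i ∈ t, x i) * X ^ t.card).coeff k
        = if t.card = k then ∏ i ∈ t, x i else 0 := by
    intro t _
    rw [coeff_C_mul, coeff_X_pow]
    rcases eq_or_ne t.card k with h | h
    · simp [h]
    · simp [h, Ne.symm h]
  rw [Finset.sum_congr rfl h2, ← Finset.sum_filter, esymmVal, Finset.powersetCard_eq_filter]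

lemma prod_comp_count {K M : Type*} [Fintype K] [DecidableEq K] [CommMonoid M]
    {n : ℕ} (x : Fin n → K) (F : K → M) :
    ∏ i : Fin n, F (x i) = ∏ v : K, F v ^ (Finset.univ.filter fun i => x i = v).card := by
  rw [Finset.prod_comp]
  refine Finset.prod_subset (Finset.subset_univ _) fun v _ hv => ?_
  have : (Finset.univ.filter fun i => x i = v) = ∅ := by
    refine Finset.filter_eq_empty_iff.mpr fun i _ h => ?_
    exact hv (Finset.mem_image.mpr ⟨i, Finset.mem_univ i, h⟩)
  rw [this, Finset.card_empty, pow_zero]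

lemma prod_X_pow_univ {K : Type*} [Fintype K] [DecidableEq K] (d : K →₀ ℕ) :
    ∏ v : K, (MvPolynomial.X v : MvPolynomial K ℤ) ^ d v = MvPolynomial.monomial d 1 := by
  rw [← MvPolynomial.prod_X_pow_eq_monomial]
  exact (Finset.prod_subset (Finset.subset_univ _) fun v _ hv => by
    rw [Finsupp.notMem_support_iff.mp hv, pow_zero]).symm

lemma multinomial_comp_equiv {β γ : Type*} [Fintype β] [Fintype γ]
    (e : β ≃ γ) (f : γ → ℕ) :
    Nat.multinomial Finset.univ (fun b => f (e b)) = Nat.multinomial Finset.univ f := by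
  rw [Nat.multinomial, Nat.multinomial, Equiv.sum_comp e f,
    Equiv.prod_comp e fun i => Nat.factorial (f i)]

lemma card_fiber_eq_multinomial {K : Type*} [Fintype K] [DecidableEq K] (n : ℕ) (c : K → ℕ)
    (hc : ∑ v, c v = n) :
    (Finset.univ.filter fun x : Fin n → K =>
        ∀ v, (Finset.univ.filter fun i => x i = v).card = c v).card
      = Nat.multinomial Finset.univ c := by
  classical
  set D : (K → ℕ) → (K →₀ ℕ) := fun g => Finsupp.equivFunOnFinite.symm g with hD
  have hDinj : Function.Injective D := Finsupp.equivFunOnFinite.symm.injective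
  have hDapply : ∀ (g : K → ℕ) (v : K), D g v = g v := fun g v => rfl
  set S : MvPolynomial K ℤ := (∑ v : K, MvPolynomial.X v) ^ n with hS
  -- route 1
  have route1 : S = ∑ x : Fin n → K,
      MvPolynomial.monomial (D fun v => (Finset.univ.filter fun i => x i = v).card) 1 := by
    have h0 : S = ∏ _i : Fin n, ∑ v : K, MvPolynomial.X v := by
      rw [Finset.prod_const, Finset.card_univ, Fintype.card_fin]
    rw [h0, Finset.prod_univ_sum]
    rw [Fintype.piFinset_univ]
    refine Finset.sum_congr rfl fun x _ => ?_
    rw [prod_comp_count x MvPolynomial.X, ← prod_X_pow_univ]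
    rfl
  -- route 2
  have route2 : S = ∑ d ∈ Finset.piAntidiag Finset.univ n,
      (Nat.multinomial Finset.univ d : MvPolynomial K ℤ) * MvPolynomial.monomial (D d) 1 := by
    rw [hS, Finset.sum_pow_eq_sum_piAntidiag]
    refine Finset.sum_congr rfl fun d _ => ?_
    rw [← prod_X_pow_univ (D d)]
    rfl
  have hcoeff := congrArg (MvPolynomial.coeff (D c)) (route1.symm.trans route2)
  rw [MvPolynomial.coeff_sum, MvPolynomial.coeff_sum] at hcoeff
  -- simplify LHS of hcoeff
  have hl : ∑ x : Fin n → K, MvPolynomial.coeff (D c)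
        (MvPolynomial.monomial (D fun v => (Finset.univ.filter fun i => x i = v).card) 1)
      = ((Finset.univ.filter fun x : Fin n → K =>
          ∀ v, (Finset.univ.filter fun i => x i = v).card = c v).card : ℤ) := by
    rw [← Finset.sum_boole]
    refine Finset.sum_congr rfl fun x _ => ?_
    rw [MvPolynomial.coeff_monomial]
    refine if_congr ?_ rfl rfl
    constructor
    · intro h v
      have := congrArg (fun f => f v) (hDinj h)
      simpa using this
    · intro h
      congr 1
      exact funext h
  have hr : ∑ d ∈ Finset.piAntidiag Finset.univ n,
      MvPolynomial.coeff (D c)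
        ((Nat.multinomial Finset.univ d : MvPolynomial K ℤ) * MvPolynomial.monomial (D d) 1)
      = (Nat.multinomial Finset.univ c : ℤ) := by
    rw [Finset.sum_eq_single c]
    · rw [← map_natCast (MvPolynomial.C : ℤ →+* MvPolynomial K ℤ), MvPolynomial.coeff_C_mul,
        MvPolynomial.coeff_monomial, if_pos rfl, mul_one]
    · intro d _ hdc
      rw [← map_natCast (MvPolynomial.C : ℤ →+* MvPolynomial K ℤ), MvPolynomial.coeff_C_mul,
        MvPolynomial.coeff_monomial, if_neg (fun h => hdc (hDinj h)), mul_zero]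
    · intro hcmem
      exact absurd (Finset.mem_piAntidiag.mpr ⟨hc, fun i _ => Finset.mem_univ i⟩) hcmem
  rw [hl, hr] at hcoeff
  exact_mod_cast hcoeff


/-- The exponential sum of `e_{n,k}` over the Galois field `F_q`, `q = p^r`, expressed as a
multinomial sum: the outer sum runs over all `(m_1, …, m_{q-1})` with `m_1 + ⋯ + m_{q-1} ≤ n`
(the nested sums `∑_{m_1=0}^{n} ∑_{m_2=0}^{n-m_1} ⋯`), and `m_0* = n - (m_1 + ⋯ + m_{q-1})`. -/
theorem stmt2 (p : ℕ) [Fact p.Prime] (r : ℕ) (hr : 0 < r) (n k : ℕ) (hk : k ≤ n)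
    (K : Type*) [Field K] [Fintype K] [Algebra (ZMod p) K]
    (hcard : Fintype.card K = p ^ r)
    (α : Fin (p ^ r - 1) → K)
    (hinj : Function.Injective α) (h0 : ∀ i, α i ≠ 0) :
    (∑ x : Fin n → K,
        Complex.exp (2 * (Real.pi : ℂ) * Complex.I / p *
          ((Algebra.trace (ZMod p) K (esymmVal n k x)).val : ℂ)))
      = ∑ m ∈ (Fintype.piFinset fun _ : Fin (p ^ r - 1) => Finset.range (n + 1)).filter
            (fun m => ∑ i, m i ≤ n),
          (Nat.multinomial Finset.univ
              (fun o : Option (Fin (p ^ r - 1)) => o.elim (n - ∑ i, m i) m) : ℂ) *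
            Complex.exp (2 * (Real.pi : ℂ) * Complex.I / p *
              ((Algebra.trace (ZMod p) K (Lam (p ^ r - 1) α m (k : ℤ))).val : ℂ)) := by
  classical
  have hq0 : 0 < p ^ r := pow_pos (Nat.Prime.pos Fact.out) r
  have hl1 : (p ^ r - 1) + 1 = p ^ r := by omega
  -- the equiv Option (Fin (p^r-1)) ≃ K
  set f : Option (Fin (p ^ r - 1)) → K := fun o => o.elim 0 α with hf
  have hfinj : Function.Injective f := by
    rintro (_ | i) (_ | j) h
    · rfl
    · exact absurd h.symm (h0 j)
    · exact absurd h (h0 i)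
    · exact congrArg some (hinj h)
  have hcards : Fintype.card (Option (Fin (p ^ r - 1))) = Fintype.card K := by
    rw [Fintype.card_option, Fintype.card_fin, hcard, hl1]
  set e : Option (Fin (p ^ r - 1)) ≃ K :=
    Equiv.ofBijective f ((Fintype.bijective_iff_injective_and_card f).mpr ⟨hfinj, hcards⟩)
    with he
  have he_none : e none = 0 := rfl
  have he_some : ∀ j, e (some j) = α j := fun j => rfl
  -- counts
  set cnt : (Fin n → K) → K → ℕ :=
    fun x v => (Finset.univ.filter fun i => x i = v).card with hcnt
  have hsum_cnt : ∀ x, ∑ v : K, cnt x v = n := by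
    intro x
    have h := Finset.card_eq_sum_card_fiberwise
      (f := x) (s := Finset.univ) (t := Finset.univ) (fun i _ => Finset.mem_univ (x i))
    rw [Finset.card_univ, Fintype.card_fin] at h
    exact h.symm
  have hsplit : ∀ x, cnt x 0 + ∑ j, cnt x (α j) = n := by
    intro x
    rw [← hsum_cnt x, ← Equiv.sum_comp e (cnt x), Fintype.sum_option, he_none]
    simp only [he_some]
  -- value on fibers
  have hval : ∀ (x : Fin n → K) (m : Fin (p ^ r - 1) → ℕ), (∀ j, cnt x (α j) = m j) →
      esymmVal n k x = Lam (p ^ r - 1) α m (k : ℤ) := by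
    intro x m hx
    rw [← coeff_prod_one_add n k x,
      prod_comp_count x (fun v => (1 : Polynomial K) + Polynomial.C v * Polynomial.X),
      ← Equiv.prod_comp e
        (fun v => ((1 : Polynomial K) + Polynomial.C v * Polynomial.X) ^ cnt x v),
      Fintype.prod_option]
    simp only [he_none, he_some, map_zero, zero_mul, add_zero, one_pow, one_mul, hx]
    exact coeff_prod_eq_Lam (p ^ r - 1) α m k
  -- regroup
  set T := (Fintype.piFinset fun _ : Fin (p ^ r - 1) => Finset.range (n + 1)).filter
      (fun m => ∑ i, m i ≤ n) with hT
  have hmap : ∀ x : Fin n → K, (fun j => cnt x (α j)) ∈ T := by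
    intro x
    refine Finset.mem_filter.mpr ⟨?_, ?_⟩
    · rw [Fintype.mem_piFinset]
      intro j
      rw [Finset.mem_range]
      have h1 := hsplit x
      have h2 : cnt x (α j) ≤ ∑ j, cnt x (α j) :=
        Finset.single_le_sum (f := fun j => cnt x (α j)) (fun _ _ => Nat.zero_le _)
          (Finset.mem_univ j)
      omega
    · show (∑ j, cnt x (α j)) ≤ n
      have := hsplit x
      omega
  rw [← Finset.sum_fiberwise_of_maps_to (fun x _ => hmap x)
    (fun x : Fin n → K => Complex.exp (2 * (Real.pi : ℂ) * Complex.I / p *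
      ((Algebra.trace (ZMod p) K (esymmVal n k x)).val : ℂ)))]
  refine Finset.sum_congr rfl fun m hm => ?_
  have hmle : ∑ i, m i ≤ n := (Finset.mem_filter.mp hm).2
  -- the inner sum is constant on the fiber
  have hconst : ∀ x ∈ Finset.univ.filter (fun x : Fin n → K => (fun j => cnt x (α j)) = m),
      Complex.exp (2 * (Real.pi : ℂ) * Complex.I / p *
        ((Algebra.trace (ZMod p) K (esymmVal n k x)).val : ℂ))
      = Complex.exp (2 * (Real.pi : ℂ) * Complex.I / p *
        ((Algebra.trace (ZMod p) K (Lam (p ^ r - 1) α m (k : ℤ))).val : ℂ)) := by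
    intro x hx
    have hxm : ∀ j, cnt x (α j) = m j :=
      fun j => congrFun (Finset.mem_filter.mp hx).2 j
    rw [hval x m hxm]
  rw [Finset.sum_congr rfl hconst, Finset.sum_const, nsmul_eq_mul]
  congr 1
  -- cardinality of the fiber
  set c : K → ℕ := fun v => ((e.symm v).elim (n - ∑ i, m i) m : ℕ) with hc
  have hce : ∀ o, c (e o) = o.elim (n - ∑ i, m i) m := by
    intro o; rw [hc]; simp
  have hc0 : c 0 = n - ∑ i, m i := by
    have := hce none; rwa [he_none] at this
  have hcα : ∀ j, c (α j) = m j := by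
    intro j; have := hce (some j); rwa [he_some] at this
  have hcsum : ∑ v, c v = n := by
    rw [← Equiv.sum_comp e c, Fintype.sum_option, he_none, hc0]
    have h3 : (∑ j, c (e (some j))) = ∑ i, m i :=
      Finset.sum_congr rfl fun j _ => by rw [he_some, hcα]
    rw [h3]
    omega
  have hsets : Finset.univ.filter (fun x : Fin n → K => (fun j => cnt x (α j)) = m)
      = Finset.univ.filter fun x : Fin n → K => ∀ v, cnt x v = c v := by
    refine Finset.filter_congr fun x _ => ?_
    constructor
    · intro h v
      have hxm : ∀ j, cnt x (α j) = m j := fun j => congrFun h j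
      obtain ⟨o, rfl⟩ := e.surjective v
      cases o with
      | none =>
          rw [he_none, hc0]
          have h1 := hsplit x
          have h2 : (∑ j, cnt x (α j)) = ∑ i, m i :=
            Finset.sum_congr rfl fun j _ => hxm j
          omega
      | some j => rw [he_some, hcα]; exact hxm j
    · intro h
      funext j
      rw [h (α j), hcα]
  rw [hsets]
  simp only [hcnt]
  rw [card_fiber_eq_multinomial n c hcsum, ← multinomial_comp_equiv e c,
    show (fun b => c (e b)) = (fun o : Option (Fin (p ^ r - 1)) => o.elim (n - ∑ i, m i) m)
      from funext hce]
end
end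

section
/- Let 1 ≤ k_1 < ... < k_s and n be positive integers, p a prime, q = p^r, F_q = {0, α_1, ..., α_{q−1}} the Galois field of q elements, and β_1, ..., β_s ∈ F_q^×. Then S_{F_q}(Σ_{j=1}^{s} β_j e_{n,k_j}) = Σ_{λ ⊣_q n} multinomial(n; λ) · Σ_{γ ∈ Sym(λ)} exp((2πi/p) · Tr_{F_q/F_p}(Σ_{j=1}^{s} β_j Λ_{α_1,...,α_{q−1}}(k_j, γ*))), where the outer sum runs over all partitions λ of n with at most q parts (padded with zeros to a list of length q), Sym(λ) is the set of all distinct rearrangements of the list λ, and γ* is the list obtained from γ by removing its first element. -/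
noncomputable section

open Finset Polynomial

theorem esymmVal_eq_coeff {R : Type*} [CommRing R] (n k : ℕ) (x : Fin n → R) :
    esymmVal n k x = (∏ i, (1 + Polynomial.C (x i) * Polynomial.X)).coeff k := by
  have : ∀ i : Fin n, (1 + C (x i) * X) = (C (x i) * X + 1) := fun i => by ring
  simp only [this]
  rw [Finset.prod_add]
  simp only [Finset.prod_const_one, mul_one]
  have : ∀ t : Finset (Fin n), (∏ i ∈ t, C (x i) * X) = C (∏ i ∈ t, x i) * X ^ t.card := by
    intro t
    rw [Finset.prod_mul_distrib, map_prod, Finset.prod_const]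
  simp only [this, finset_sum_coeff, coeff_C_mul, coeff_X_pow]
  rw [esymmVal, Finset.powersetCard_eq_filter, Finset.sum_filter]
  refine Finset.sum_congr rfl fun t _ => ?_
  by_cases h : t.card = k
  · simp [h]
  · rw [if_neg h, if_neg (by omega : ¬ k = t.card), mul_zero]

theorem lam_eq_coeff {R : Type*} [CommRing R] :
    ∀ (l : ℕ) (a : Fin l → R) (m : Fin l → ℕ) (kk : ℤ),
      Lam l a m kk =
        if 0 ≤ kk then (∏ i, (1 + C (a i) * X) ^ m i).coeff kk.toNat else 0 := by
  intro l
  induction l with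
  | zero =>
    intro a m kk
    rw [Lam]
    simp only [Finset.univ_eq_empty, Finset.prod_empty, coeff_one]
    rcases lt_trichotomy kk 0 with h | h | h
    · rw [if_neg (by omega), if_neg (by omega)]
    · simp [h]
    · rw [if_neg (by omega), if_pos (le_of_lt h), if_neg (by omega)]
  | succ l ih =>
    intro a m kk
    rw [Lam]
    simp only [ih]
    rw [Fin.prod_univ_castSucc]
    set P : Polynomial R := ∏ i : Fin l, (1 + C (a i.castSucc) * X) ^ m i.castSucc with hP
    set c : R := a (Fin.last l) with hc
    set M : ℕ := m (Fin.last l) with hM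
    have hexp : (1 + C c * X) ^ M = ∑ j ∈ Finset.range (M + 1),
        C ((M.choose j : R) * c ^ j) * X ^ j := by
      rw [add_comm (1 : R[X]), add_pow]
      refine Finset.sum_congr rfl fun j _ => ?_
      rw [one_pow, mul_one, mul_pow, ← C_pow, map_mul, map_natCast]
      ring
    rw [hexp, Finset.mul_sum]
    by_cases hkk : 0 ≤ kk
    · rw [if_pos hkk, finset_sum_coeff]
      refine Finset.sum_congr rfl fun j hj => ?_
      rw [show P * (C ((M.choose j : R) * c ^ j) * X ^ j)
            = (C ((M.choose j : R) * c ^ j) * P) * X ^ j by ring,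
        coeff_mul_X_pow', coeff_C_mul]
      by_cases hjk : (j : ℤ) ≤ kk
      · rw [if_pos (by omega : (0:ℤ) ≤ kk - (j:ℤ)), if_pos (by omega : j ≤ kk.toNat),
          show (kk - (j:ℤ)).toNat = kk.toNat - j by omega]
      · rw [if_neg (by omega), if_neg (by omega), mul_zero]
    · rw [if_neg hkk]
      refine Finset.sum_eq_zero fun j hj => ?_
      rw [if_neg (by omega), mul_zero]

section
variable {K : Type*} [Field K] [Fintype K] [DecidableEq K]

theorem prod_regroup (n : ℕ) (x : Fin n → K) :
    (∏ i, (1 + C (x i) * X)) =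
      ∏ a : K, (1 + C a * X) ^ (univ.filter fun i => x i = a).card := by
  rw [← Finset.prod_fiberwise_of_maps_to (fun i _ => Finset.mem_univ (x i))
    (fun i => (1 + C (x i) * X))]
  refine Finset.prod_congr rfl fun a _ => ?_
  rw [← Finset.prod_const]
  refine Finset.prod_congr rfl fun i hi => ?_
  rw [Finset.mem_filter] at hi
  rw [hi.2]

theorem prod_drop_zero (q : ℕ) (hq : Fintype.card K = q + 1) (α : Fin q → K)
    (hinj : Function.Injective α) (h0 : ∀ i, α i ≠ 0) (m : K → ℕ) :
    (∏ a : K, (1 + C a * X) ^ m a) = ∏ i : Fin q, (1 + C (α i) * X) ^ m (α i) := by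
  have himg : Finset.image α univ = univ.erase 0 := by
    apply Finset.eq_of_subset_of_card_le
    · intro a ha
      rw [Finset.mem_image] at ha
      obtain ⟨i, _, rfl⟩ := ha
      exact Finset.mem_erase.2 ⟨h0 i, Finset.mem_univ _⟩
    · rw [Finset.card_erase_of_mem (Finset.mem_univ _),
        Finset.card_image_of_injective _ hinj]
      simp [hq]
  rw [← Finset.mul_prod_erase univ _ (Finset.mem_univ (0 : K))]
  rw [show (1 + C (0:K) * X) = 1 by simp, one_pow, one_mul, ← himg,
    Finset.prod_image (fun i _ j _ h => hinj h)]
end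

section
variable {K : Type*} [Fintype K] [DecidableEq K]

def fibEquiv (m : K → ℕ) (a : K) : {s : Σ b : K, Fin (m b) // s.1 = a} ≃ Fin (m a) where
  toFun s := Fin.cast (congrArg m s.2) s.1.2
  invFun v := ⟨⟨a, v⟩, rfl⟩
  left_inv := by rintro ⟨⟨b, v⟩, rfl⟩; rfl
  right_inv v := rfl

theorem card_count_eq_multinomial (n : ℕ) (m : K → ℕ) (hm : ∑ a, m a = n) :
    (univ.filter fun x : Fin n → K =>
        ∀ a, (univ.filter fun i => x i = a).card = m a).card = Nat.multinomial univ m := by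
  classical
  have hcard : Fintype.card (Fin n) = Fintype.card (Σ a : K, Fin (m a)) := by
    simp [hm]
  let e0 : Fin n ≃ Σ a : K, Fin (m a) := Fintype.equivOfCardEq hcard
  let x0 : Fin n → K := fun i => (e0 i).1
  have hx0 : ∀ a, Fintype.card {i : Fin n // x0 i = a} = m a := fun a => by
    rw [Fintype.card_congr ((Equiv.subtypeEquiv e0 fun i => Iff.rfl).trans (fibEquiv m a)),
      Fintype.card_fin]
  have hstab : Fintype.card {g : Equiv.Perm (Fin n) // x0 ∘ g = x0}
      = ∏ a : K, (m a).factorial := by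
    rw [DomMulAct.stabilizer_card]
    exact Finset.prod_congr rfl fun a _ => by rw [hx0]
  set S := univ.filter fun x : Fin n → K =>
    ∀ a, (univ.filter fun i => x i = a).card = m a with hS
  have hcnt : ∀ (x : Fin n → K) (a : K),
      (univ.filter fun i => x i = a).card = Fintype.card {i // x i = a} := fun x a =>
    (Fintype.card_subtype _).symm
  have hmaps : ∀ σ : Equiv.Perm (Fin n), (x0 ∘ σ) ∈ S := by
    intro σ
    rw [hS, mem_filter]
    refine ⟨mem_univ _, fun a => ?_⟩
    rw [hcnt]
    exact (Fintype.card_congr (Equiv.subtypeEquiv σ fun i => Iff.rfl)).trans (hx0 a)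
  have hsurj : ∀ x ∈ S, ∃ σ : Equiv.Perm (Fin n), x0 ∘ σ = x := by
    intro x hx
    rw [hS, mem_filter] at hx
    have hfib : ∀ a, Fintype.card {i // x i = a} = Fintype.card {i // x0 i = a} := fun a => by
      rw [← hcnt, hx.2 a, hx0]
    refine ⟨(Equiv.sigmaFiberEquiv x).symm.trans
      ((Equiv.sigmaCongrRight fun a => Fintype.equivOfCardEq (hfib a)).trans
        (Equiv.sigmaFiberEquiv x0)), funext fun i => ?_⟩
    exact (((Equiv.sigmaCongrRight fun a => Fintype.equivOfCardEq (hfib a))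
      ((Equiv.sigmaFiberEquiv x).symm i)).2).2
  have hfiber : ∀ x ∈ S,
      (univ.filter fun σ : Equiv.Perm (Fin n) => x0 ∘ σ = x).card
        = ∏ a : K, (m a).factorial := by
    intro x hx
    obtain ⟨τ, rfl⟩ := hsurj x hx
    rw [← hstab, Fintype.card_subtype]
    have himg : (univ.filter fun σ : Equiv.Perm (Fin n) => x0 ∘ σ = x0 ∘ τ)
        = (univ.filter fun σ : Equiv.Perm (Fin n) => x0 ∘ σ = x0).image (· * τ) := by
      ext σ
      simp only [Finset.mem_image, mem_filter, mem_univ, true_and]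
      constructor
      · intro h
        refine ⟨σ * τ⁻¹, funext fun i => ?_, by group⟩
        have := congrFun h (τ⁻¹ i)
        simpa using this
      · rintro ⟨ρ, hρ, rfl⟩
        funext i
        exact congrFun hρ (τ i)
    rw [himg, Finset.card_image_of_injective _ (mul_left_injective τ)]
  have hsum := Finset.card_eq_sum_card_fiberwise
    (f := fun σ : Equiv.Perm (Fin n) => x0 ∘ σ) (s := univ) (t := S) (fun σ _ => hmaps σ)
  rw [Finset.card_univ, Fintype.card_perm, Fintype.card_fin,
    Finset.sum_congr rfl hfiber, Finset.sum_const, smul_eq_mul] at hsum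
  have hspec := Nat.multinomial_spec (univ : Finset K) m
  rw [hm] at hspec
  have hpos : 0 < ∏ a : K, (m a).factorial := Finset.prod_pos fun a _ => Nat.factorial_pos _
  exact Nat.eq_of_mul_eq_mul_right hpos (hsum.symm.trans (hspec.symm.trans (mul_comm _ _)))
end

theorem multinomial_comp_equiv_s5 {A B : Type*} [Fintype A] [Fintype B] [DecidableEq A]
    [DecidableEq B] (e : B ≃ A) (m : A → ℕ) :
    Nat.multinomial univ (m ∘ e) = Nat.multinomial univ m := by
  rw [Nat.multinomial, Nat.multinomial]
  congr 1
  · exact congrArg Nat.factorial (Fintype.sum_equiv e _ m fun b => rfl)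
  · exact Fintype.prod_equiv e _ (fun a => (m a).factorial) fun b => rfl

theorem multinomial_perm {q : ℕ} (c d : Fin q → ℕ) (h : (List.ofFn c).Perm (List.ofFn d)) :
    Nat.multinomial univ c = Nat.multinomial univ d := by
  rw [Nat.multinomial, Nat.multinomial, ← List.sum_ofFn, ← List.sum_ofFn, h.sum_eq]
  congr 1
  have := (h.map Nat.factorial).prod_eq
  simpa [List.map_ofFn, List.prod_ofFn, Function.comp] using this

theorem ofFn_getD {q : ℕ} (γ : List ℕ) (h : γ.length = q) :
    List.ofFn (fun i : Fin q => γ.getD (i : ℕ) 0) = γ := by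
  apply List.ext_getElem
  · simp [h]
  · intro i h1 h2
    rw [List.getElem_ofFn]
    exact List.getD_eq_getElem γ 0 (by omega)

theorem getD_ofFn {q : ℕ} (c : Fin q → ℕ) (j : Fin q) :
    (List.ofFn c).getD (j : ℕ) 0 = c j := by
  rw [List.getD_eq_getElem _ _ (by simp), List.getElem_ofFn]

theorem sorted_ofFn_iff {q : ℕ} (lam : Fin q → ℕ) :
    List.Pairwise (· ≥ ·) (List.ofFn lam) ↔ ∀ i j : Fin q, i ≤ j → lam j ≤ lam i := by
  rw [List.pairwise_ofFn]
  constructor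
  · intro h i j hij
    rcases eq_or_lt_of_le hij with rfl | hlt
    · exact le_refl _
    · exact h hlt
  · exact fun h i j hij => h i j (le_of_lt hij)

theorem rhs_reindex (q n : ℕ) (f : List ℕ → ℂ) :
    (∑ lam ∈ (Fintype.piFinset fun _ : Fin q => Finset.range (n + 1)).filter
        (fun lam => (∀ i j : Fin q, i ≤ j → lam j ≤ lam i) ∧ ∑ i, lam i = n),
      (Nat.multinomial Finset.univ lam : ℂ) *
        ∑ γ ∈ (List.ofFn lam).permutations.toFinset, f γ)
    = ∑ c ∈ (Fintype.piFinset fun _ : Fin q => Finset.range (n + 1)).filter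
        (fun c => ∑ i, c i = n),
      (Nat.multinomial Finset.univ c : ℂ) * f (List.ofFn c) := by
  classical
  simp_rw [Finset.mul_sum]
  rw [Finset.sum_sigma']
  refine Finset.sum_nbij' (i := fun a => fun j : Fin q => a.2.getD (j : ℕ) 0)
    (j := fun c => ⟨fun j : Fin q =>
      (List.insertionSort (· ≥ ·) (List.ofFn c)).getD (j : ℕ) 0, List.ofFn c⟩)
    ?_ ?_ ?_ ?_ ?_
  · -- maps forward
    rintro ⟨lam, γ⟩ ha
    rw [Finset.mem_sigma, Finset.mem_filter] at ha
    obtain ⟨⟨hpi, hsort, hsum⟩, hγ⟩ := ha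
    dsimp only at hpi hsort hsum hγ ⊢
    rw [List.mem_toFinset, List.mem_permutations] at hγ
    have hlen : γ.length = q := by rw [hγ.length_eq, List.length_ofFn]
    have hofn : List.ofFn (fun j : Fin q => γ.getD (j : ℕ) 0) = γ := ofFn_getD γ hlen
    rw [Finset.mem_filter, Fintype.mem_piFinset]
    constructor
    · intro j
      rw [Finset.mem_range]
      have hmem : γ.getD (j : ℕ) 0 ∈ γ := by
        rw [List.getD_eq_getElem _ _ (by omega)]
        exact List.getElem_mem _
      have : γ.getD (j : ℕ) 0 ∈ List.ofFn lam := hγ.mem_iff.1 hmem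
      rw [List.mem_ofFn] at this
      obtain ⟨i, hi⟩ := this
      have := Finset.mem_range.1 (Fintype.mem_piFinset.1 hpi i)
      exact hi ▸ this
    · rw [← List.sum_ofFn (f := fun j : Fin q => γ.getD (j : ℕ) 0), hofn, hγ.sum_eq,
        List.sum_ofFn]
      exact hsum
  · -- maps backward
    intro c hc
    rw [Finset.mem_filter, Fintype.mem_piFinset] at hc
    obtain ⟨hpi, hsum⟩ := hc
    set l := List.insertionSort (· ≥ ·) (List.ofFn c) with hl
    have hlen : l.length = q := by rw [hl, List.length_insertionSort, List.length_ofFn]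
    have hofn : List.ofFn (fun j : Fin q => l.getD (j : ℕ) 0) = l := ofFn_getD l hlen
    have hperm : l.Perm (List.ofFn c) := List.perm_insertionSort _ _
    rw [Finset.mem_sigma, Finset.mem_filter, Fintype.mem_piFinset]
    refine ⟨⟨fun j => ?_, ?_, ?_⟩, ?_⟩
    · rw [Finset.mem_range]
      have hmem : l.getD (j : ℕ) 0 ∈ l := by
        rw [List.getD_eq_getElem _ _ (by omega)]
        exact List.getElem_mem _
      have : l.getD (j : ℕ) 0 ∈ List.ofFn c := hperm.mem_iff.1 hmem
      rw [List.mem_ofFn] at this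
      obtain ⟨i, hi⟩ := this
      show l.getD (↑j) 0 < n + 1
      exact hi ▸ Finset.mem_range.1 (hpi i)
    · rw [← sorted_ofFn_iff, hofn]
      exact List.pairwise_insertionSort _ _
    · rw [← List.sum_ofFn (f := fun j : Fin q => l.getD (j : ℕ) 0), hofn, hperm.sum_eq,
        List.sum_ofFn]
      exact hsum
    · rw [List.mem_toFinset, List.mem_permutations, hofn]
      exact hperm.symm
  · -- left inverse
    rintro ⟨lam, γ⟩ ha
    rw [Finset.mem_sigma, Finset.mem_filter] at ha
    obtain ⟨⟨hpi, hsort, hsum⟩, hγ⟩ := ha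
    dsimp only at hpi hsort hsum hγ ⊢
    rw [List.mem_toFinset, List.mem_permutations] at hγ
    have hlen : γ.length = q := by rw [hγ.length_eq, List.length_ofFn]
    have hofn : List.ofFn (fun j : Fin q => γ.getD (j : ℕ) 0) = γ := ofFn_getD γ hlen
    haveI : IsAntisymm ℕ (· ≥ ·) := ⟨fun a b h1 h2 => le_antisymm h2 h1⟩
    have hsorteq : List.insertionSort (· ≥ ·) γ = List.ofFn lam :=
      List.Perm.eq_of_pairwise' (List.pairwise_insertionSort _ _) ((sorted_ofFn_iff lam).2 hsort)
        ((List.perm_insertionSort _ _).trans hγ)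
    refine Sigma.ext ?_ (heq_of_eq ?_)
    · funext j
      simp only [hofn, hsorteq]
      exact getD_ofFn lam j
    · simp only [hofn]
  · -- right inverse
    intro c hc
    funext j
    exact getD_ofFn c j
  · -- values
    rintro ⟨lam, γ⟩ ha
    rw [Finset.mem_sigma, Finset.mem_filter] at ha
    obtain ⟨⟨hpi, hsort, hsum⟩, hγ⟩ := ha
    dsimp only at hpi hsort hsum hγ ⊢
    rw [List.mem_toFinset, List.mem_permutations] at hγ
    have hlen : γ.length = q := by rw [hγ.length_eq, List.length_ofFn]
    have hofn : List.ofFn (fun j : Fin q => γ.getD (j : ℕ) 0) = γ := ofFn_getD γ hlen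
    have hmult : Nat.multinomial univ lam
        = Nat.multinomial univ (fun j : Fin q => γ.getD (j : ℕ) 0) := by
      apply multinomial_perm
      rw [hofn]
      exact hγ.symm
    rw [hmult, hofn]

theorem tail_ofFn_getD {q : ℕ} (hq : 2 ≤ q) (c : Fin q → ℕ) (i : ℕ) (hi : i < q - 1) :
    (List.ofFn c).tail.getD i 0 = c ⟨i + 1, by omega⟩ := by
  rw [List.getD_eq_getElem _ _ (by simp [List.length_tail]; omega), List.getElem_tail,
    List.getElem_ofFn]

/-- The exponential sum of `∑_j β_j e_{n,k_j}` over `F_q`, `q = p^r`, as a sum over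
partitions `λ ⊣_q n` (weakly decreasing tuples of length `q` summing to `n`), where
`Sym(λ)` is the set of distinct rearrangements of `λ` (as a list) and `γ*` drops the first
entry of `γ`. -/
theorem stmt5 (p : ℕ) [Fact p.Prime] (r : ℕ) (hr : 0 < r) (n : ℕ) (hn : 0 < n)
    (s : ℕ) (hs : 0 < s) (k : Fin s → ℕ) (hk1 : ∀ j, 1 ≤ k j) (hmono : StrictMono k)
    (K : Type*) [Field K] [Fintype K] [Algebra (ZMod p) K]
    (hcard : Fintype.card K = p ^ r)
    (β : Fin s → K) (hβ : ∀ j, β j ≠ 0)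
    (α : Fin (p ^ r - 1) → K)
    (hinj : Function.Injective α) (h0 : ∀ i, α i ≠ 0) :
    (∑ x : Fin n → K,
        Complex.exp (2 * (Real.pi : ℂ) * Complex.I / p *
          ((Algebra.trace (ZMod p) K (∑ j, β j * esymmVal n (k j) x)).val : ℂ)))
      = ∑ lam ∈ (Fintype.piFinset fun _ : Fin (p ^ r) => Finset.range (n + 1)).filter
            (fun lam => (∀ i j : Fin (p ^ r), i ≤ j → lam j ≤ lam i) ∧ ∑ i, lam i = n),
          (Nat.multinomial Finset.univ lam : ℂ) *
            ∑ γ ∈ (List.ofFn lam).permutations.toFinset,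
              Complex.exp (2 * (Real.pi : ℂ) * Complex.I / p *
                ((Algebra.trace (ZMod p) K
                    (∑ j, β j *
                      Lam (p ^ r - 1) α (fun i => γ.tail.getD (i : ℕ) 0) (k j : ℤ))).val : ℂ)) := by
  classical
  have hp2 : 2 ≤ p := (Fact.out : p.Prime).two_le
  have hq2 : 2 ≤ p ^ r := le_trans hp2 (Nat.le_self_pow (by omega) p)
  -- the enumeration of K
  let enum : Fin (p ^ r) → K := fun j =>
    if h : (j : ℕ) = 0 then 0 else α ⟨(j : ℕ) - 1, by omega⟩
  have henuminj : Function.Injective enum := by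
    intro j1 j2 h
    simp only [enum] at h
    split_ifs at h with h1 h2 h2
    · exact Fin.ext (h1.trans h2.symm)
    · exact absurd h.symm (h0 _)
    · exact absurd h (h0 _)
    · have := hinj h
      rw [Fin.mk.injEq] at this
      exact Fin.ext (by omega)
  have hbij : Function.Bijective enum :=
    (Fintype.bijective_iff_injective_and_card enum).2 ⟨henuminj, by simp [hcard]⟩
  let E : Fin (p ^ r) ≃ K := Equiv.ofBijective enum hbij
  -- key pointwise identity
  have key : ∀ (x : Fin n → K) (kj : ℕ),
      esymmVal n kj x
        = Lam (p ^ r - 1) α (fun i => (univ.filter fun t => x t = α i).card) (kj : ℤ) := by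
    intro x kj
    rw [esymmVal_eq_coeff, prod_regroup,
      prod_drop_zero (p ^ r - 1) (by rw [hcard]; omega) α hinj h0,
      lam_eq_coeff, if_pos (Int.natCast_nonneg kj), Int.toNat_natCast]
  -- the common middle form
  let f : List ℕ → ℂ := fun γ =>
    Complex.exp (2 * (Real.pi : ℂ) * Complex.I / p *
      ((Algebra.trace (ZMod p) K
          (∑ j, β j * Lam (p ^ r - 1) α (fun i => γ.tail.getD (i : ℕ) 0) (k j : ℤ))).val : ℂ))
  refine Eq.trans ?_ (rhs_reindex (p ^ r) n f).symm
  -- now handle the LHS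
  let cmap : (Fin n → K) → (Fin (p ^ r) → ℕ) :=
    fun x j => (univ.filter fun t => x t = enum j).card
  have hcntsum : ∀ x : Fin n → K, ∑ a : K, (univ.filter fun t => x t = a).card = n := by
    intro x
    rw [← Finset.card_eq_sum_card_fiberwise (fun t (_ : t ∈ univ) => mem_univ (x t)),
      Finset.card_univ, Fintype.card_fin]
  have hmapsto : ∀ x : Fin n → K,
      cmap x ∈ (Fintype.piFinset fun _ : Fin (p ^ r) => Finset.range (n + 1)).filter
        (fun c => ∑ i, c i = n) := by
    intro x
    rw [Finset.mem_filter, Fintype.mem_piFinset]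
    refine ⟨fun j => Finset.mem_range.2 ?_, ?_⟩
    · show (univ.filter fun t => x t = enum j).card < n + 1
      have : (univ.filter fun t => x t = enum j).card ≤ (univ : Finset (Fin n)).card :=
        Finset.card_filter_le _ _
      rw [Finset.card_univ, Fintype.card_fin] at this
      omega
    · rw [Fintype.sum_equiv E (fun j => cmap x j)
        (fun a => (univ.filter fun t => x t = a).card) (fun j => rfl)]
      exact hcntsum x
  rw [← Finset.sum_fiberwise_of_maps_to (fun x _ => hmapsto x)
    (fun x => Complex.exp (2 * (Real.pi : ℂ) * Complex.I / p *
      ((Algebra.trace (ZMod p) K (∑ j, β j * esymmVal n (k j) x)).val : ℂ)))]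
  refine Finset.sum_congr rfl fun c hc => ?_
  have hcsum : ∑ i, c i = n := (Finset.mem_filter.1 hc).2
  -- each summand in the fiber equals f (List.ofFn c)
  have hterm : ∀ x ∈ univ.filter fun x : Fin n → K => cmap x = c,
      Complex.exp (2 * (Real.pi : ℂ) * Complex.I / p *
        ((Algebra.trace (ZMod p) K (∑ j, β j * esymmVal n (k j) x)).val : ℂ))
      = f (List.ofFn c) := by
    intro x hx
    have hxc : cmap x = c := (Finset.mem_filter.1 hx).2
    show _ = Complex.exp (2 * (Real.pi : ℂ) * Complex.I / p *
      ((Algebra.trace (ZMod p) K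
          (∑ j, β j * Lam (p ^ r - 1) α
            (fun i => (List.ofFn c).tail.getD (i : ℕ) 0) (k j : ℤ))).val : ℂ))
    have harg : (∑ j, β j * esymmVal n (k j) x)
        = ∑ j, β j * Lam (p ^ r - 1) α
            (fun i => (List.ofFn c).tail.getD (i : ℕ) 0) (k j : ℤ) := by
      refine Finset.sum_congr rfl fun j _ => ?_
      rw [key x (k j)]
      have hfun : (fun i : Fin (p ^ r - 1) => ((univ.filter fun t => x t = α i).card : ℕ))
          = fun i : Fin (p ^ r - 1) => (List.ofFn c).tail.getD (i : ℕ) 0 := by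
        funext i
        rw [tail_ofFn_getD hq2 c (i : ℕ) (by omega), ← hxc]
        show (univ.filter fun t => x t = α i).card
          = (univ.filter fun t => x t = enum ⟨(i : ℕ) + 1, by omega⟩).card
        have henum : enum ⟨(i : ℕ) + 1, by omega⟩ = α i := by
          show (if h : ((i : ℕ) + 1) = 0 then (0 : K) else α ⟨(i : ℕ) + 1 - 1, by omega⟩) = α i
          rw [dif_neg (by omega)]
          exact congrArg α (Fin.ext (by simp))
        rw [henum]
      rw [hfun]
    rw [harg]
  rw [Finset.sum_congr rfl hterm, Finset.sum_const, nsmul_eq_mul]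
  congr 1
  -- the fiber cardinality is the multinomial coefficient
  have hfilter : (univ.filter fun x : Fin n → K => cmap x = c)
      = univ.filter fun x : Fin n → K =>
          ∀ a, (univ.filter fun t => x t = a).card = (fun a => c (E.symm a)) a := by
    ext x
    simp only [Finset.mem_filter, Finset.mem_univ, true_and]
    constructor
    · intro h a
      have := congrFun h (E.symm a)
      dsimp only [cmap] at this
      rwa [show enum (E.symm a) = a from E.apply_symm_apply a] at this
    · intro h
      funext j
      have := h (enum j)
      dsimp only [cmap]
      rwa [show E.symm (enum j) = j from E.symm_apply_apply j] at this
  rw [hfilter, card_count_eq_multinomial n (fun a => c (E.symm a))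
    (by rw [Fintype.sum_equiv E.symm _ c (fun a => rfl)]; exact hcsum)]
  rw [show (fun a => c (E.symm a)) = c ∘ E.symm from rfl, multinomial_comp_equiv_s5 E.symm c]
end
end

section
/- Let F: Z → Z be a periodic function with period D (i.e., F(j + D) = F(j) for all j ∈ Z), and let ξ be a complex number with ξ^D = 1 (not necessarily primitive). Let a be a complex number. Then for every natural number n, Σ_{l=0}^{n} C(n,l) · a^l · ξ^{F(l)} = (1/D) Σ_{t=0}^{D−1} ξ^{F(t)} Σ_{j=0}^{D−1} ξ_D^{tj} · λ_j^n, where ξ_D = exp(2πi/D) and λ_j = 1 + a·ξ_D^{−j}. -/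
noncomputable section

open Finset

/-- If `F : ℤ → ℤ` is periodic with period `D` and `ξ^D = 1`, then
`∑_{l=0}^n C(n,l) a^l ξ^{F(l)} = (1/D) ∑_{t=0}^{D-1} ξ^{F(t)} ∑_{j=0}^{D-1} ξ_D^{tj} λ_j^n`,
where `ξ_D = exp(2πi/D)` and `λ_j = 1 + a ξ_D^{-j}`. -/
theorem stmt7 (D : ℕ) (hD : 0 < D) (F : ℤ → ℤ) (hF : ∀ j : ℤ, F (j + D) = F j)
    (ξ : ℂ) (hξ : ξ ^ D = 1) (a : ℂ) (n : ℕ) :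
    (∑ l ∈ Finset.range (n + 1), (n.choose l : ℂ) * a ^ l * ξ ^ F l)
      = (1 / D) * ∑ t ∈ Finset.range D, ξ ^ F t *
          ∑ j ∈ Finset.range D,
            Complex.exp (2 * (Real.pi : ℂ) * Complex.I / D) ^ (t * j) *
              (1 + a * Complex.exp (2 * (Real.pi : ℂ) * Complex.I / D) ^ (-(j : ℤ))) ^ n := by
  set ω : ℂ := Complex.exp (2 * (Real.pi : ℂ) * Complex.I / D) with hωdef
  have hprim : IsPrimitiveRoot ω D := Complex.isPrimitiveRoot_exp D hD.ne'
  have hω0 : ω ≠ 0 := Complex.exp_ne_zero _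
  have hDC : (D : ℂ) ≠ 0 := Nat.cast_ne_zero.mpr hD.ne'
  -- periodicity extended to multiples
  have hFper : ∀ (j : ℤ) (k : ℕ), F (j + k * D) = F j := by
    intro j k
    induction k with
    | zero => simp
    | succ m ih =>
      have h1 : j + ((m : ℤ) + 1) * D = (j + m * D) + D := by ring
      rw [Nat.cast_succ, h1, hF, ih]
  -- orthogonality / geometric sum
  have hsum : ∀ m : ℤ, (∑ j ∈ range D, (ω ^ m) ^ j) = if (D : ℤ) ∣ m then (D : ℂ) else 0 := by
    intro m
    by_cases h : (D : ℤ) ∣ m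
    · rw [(hprim.zpow_eq_one_iff_dvd m).mpr h]
      simp [h]
    · have hne : ω ^ m ≠ 1 := fun e => h ((hprim.zpow_eq_one_iff_dvd m).mp e)
      have hpow : (ω ^ m) ^ D = 1 := by
        rw [← zpow_natCast (ω ^ m) D, ← zpow_mul, mul_comm, zpow_mul, zpow_natCast,
          hprim.pow_eq_one, one_zpow]
      rw [geom_sum_eq hne, hpow]
      simp [h]
  -- key filter identity
  have key : ∀ l : ℕ,
      (1 / (D : ℂ)) * ∑ t ∈ range D, ξ ^ F t * ∑ j ∈ range D, (ω ^ ((t : ℤ) - l)) ^ j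
        = ξ ^ F l := by
    intro l
    have hmem : l % D ∈ range D := Finset.mem_range.mpr (Nat.mod_lt l hD)
    have heval : ∑ t ∈ range D, ξ ^ F t * ∑ j ∈ range D, (ω ^ ((t : ℤ) - l)) ^ j
        = ξ ^ F l * D := by
      rw [Finset.sum_eq_single (l % D)]
      · rw [hsum]
        have hld : (l : ℤ) = ((l % D : ℕ) : ℤ) + (l / D : ℕ) * D := by
          exact_mod_cast (Nat.mod_add_div' l D).symm
        have hdvd : (D : ℤ) ∣ ((l % D : ℕ) : ℤ) - l := by
          rw [hld]
          exact ⟨-(l / D : ℕ), by ring⟩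
        rw [if_pos hdvd]
        have hFeq : F ((l % D : ℕ) : ℤ) = F l := by
          rw [hld, hFper]
        rw [hFeq]
      · intro t ht htne
        rw [hsum]
        have hnd : ¬ (D : ℤ) ∣ ((t : ℕ) : ℤ) - l := by
          intro hdvd
          have ht' := Finset.mem_range.mp ht
          have hmod : (t : ℤ) % D = (l : ℤ) % D :=
            Int.emod_eq_emod_iff_emod_sub_eq_zero.mpr (Int.emod_eq_zero_of_dvd hdvd)
          have hmodn : t % D = l % D := by exact_mod_cast hmod
          rw [Nat.mod_eq_of_lt ht'] at hmodn
          exact htne hmodn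
        rw [if_neg hnd, mul_zero]
      · intro h
        exact absurd hmem h
    rw [heval]
    field_simp
  -- expand the binomial
  have hexp : ∀ t ∈ range D,
      ξ ^ F t * ∑ j ∈ range D, ω ^ ((t : ℕ) * j) * (1 + a * ω ^ (-(j : ℤ))) ^ n
        = ∑ l ∈ range (n + 1), (n.choose l : ℂ) * a ^ l *
            (ξ ^ F t * ∑ j ∈ range D, (ω ^ ((t : ℤ) - l)) ^ j) := by
    intro t _
    have hbin : ∀ j : ℕ, (1 + a * ω ^ (-(j : ℤ))) ^ n
        = ∑ l ∈ range (n + 1), (n.choose l : ℂ) * a ^ l * ω ^ (-(j : ℤ) * l) := by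
      intro j
      rw [add_comm, add_pow]
      refine Finset.sum_congr rfl fun l _ => ?_
      rw [mul_pow, one_pow, mul_one, ← zpow_natCast (ω ^ (-(j : ℤ))) l, ← zpow_mul]
      ring
    calc ξ ^ F t * ∑ j ∈ range D, ω ^ ((t : ℕ) * j) * (1 + a * ω ^ (-(j : ℤ))) ^ n
        = ∑ j ∈ range D, ∑ l ∈ range (n + 1),
            (n.choose l : ℂ) * a ^ l * (ξ ^ F t * (ω ^ ((t : ℕ) * j) * ω ^ (-(j : ℤ) * l))) := by
          rw [Finset.mul_sum]
          refine Finset.sum_congr rfl fun j _ => ?_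
          rw [hbin j, Finset.mul_sum, Finset.mul_sum]
          refine Finset.sum_congr rfl fun l _ => ?_
          ring
      _ = ∑ l ∈ range (n + 1), ∑ j ∈ range D,
            (n.choose l : ℂ) * a ^ l * (ξ ^ F t * (ω ^ ((t : ℕ) * j) * ω ^ (-(j : ℤ) * l))) :=
          Finset.sum_comm
      _ = ∑ l ∈ range (n + 1), (n.choose l : ℂ) * a ^ l *
            (ξ ^ F t * ∑ j ∈ range D, (ω ^ ((t : ℤ) - l)) ^ j) := by
          refine Finset.sum_congr rfl fun l _ => ?_
          rw [Finset.mul_sum, Finset.mul_sum]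
          refine Finset.sum_congr rfl fun j _ => ?_
          have : ω ^ ((t : ℕ) * j) * ω ^ (-(j : ℤ) * l) = (ω ^ ((t : ℤ) - l)) ^ j := by
            rw [← zpow_natCast ω ((t : ℕ) * j), ← zpow_add₀ hω0,
              ← zpow_natCast (ω ^ ((t : ℤ) - l)) j, ← zpow_mul]
            congr 1
            push_cast
            ring
          rw [this]
  rw [Finset.sum_congr rfl hexp, Finset.sum_comm, Finset.mul_sum]
  refine Finset.sum_congr rfl fun l _ => ?_
  rw [← Finset.mul_sum, mul_left_comm, key l]
end
end

section
/- Let F: Z → Z be a periodic function with period D, and let ξ be a complex number with ξ^D = 1 (not necessarily primitive). Then for every natural number n, Σ_{l=0}^{n} C(n,l) · ξ^{F(l)} = (1/D) Σ_{t=0}^{D−1} ξ^{F(t)} Σ_{j=0}^{D−1} ξ_D^{tj} · (1 + ξ_D^{−j})^n, where ξ_D = exp(2πi/D). -/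
noncomputable section

/-- If `F : ℤ → ℤ` is periodic with period `D` and `ξ^D = 1`, then
`∑_{l=0}^n C(n,l) ξ^{F(l)} = (1/D) ∑_{t=0}^{D-1} ξ^{F(t)} ∑_{j=0}^{D-1} ξ_D^{tj} (1+ξ_D^{-j})^n`,
where `ξ_D = exp(2πi/D)`. -/
theorem stmt8 (D : ℕ) (hD : 0 < D) (F : ℤ → ℤ) (hF : ∀ j : ℤ, F (j + D) = F j)
    (ξ : ℂ) (hξ : ξ ^ D = 1) (n : ℕ) :
    (∑ l ∈ Finset.range (n + 1), (n.choose l : ℂ) * ξ ^ F l)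
      = (1 / D) * ∑ t ∈ Finset.range D, ξ ^ F t *
          ∑ j ∈ Finset.range D,
            Complex.exp (2 * (Real.pi : ℂ) * Complex.I / D) ^ (t * j) *
              (1 + Complex.exp (2 * (Real.pi : ℂ) * Complex.I / D) ^ (-(j : ℤ))) ^ n := by
  set ω : ℂ := Complex.exp (2 * (Real.pi : ℂ) * Complex.I / D) with hωdef
  have hDne : (D : ℂ) ≠ 0 := Nat.cast_ne_zero.mpr hD.ne'
  have hprim : IsPrimitiveRoot ω D := Complex.isPrimitiveRoot_exp D hD.ne'
  have hω1 : ω ^ D = 1 := hprim.pow_eq_one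
  have hωne : ω ≠ 0 := by
    intro h
    rw [h, zero_pow hD.ne'] at hω1
    exact zero_ne_one hω1
  -- roots of unity filter
  have key : ∀ m : ℤ, ∑ j ∈ Finset.range D, ω ^ ((j : ℤ) * m)
      = if (D : ℤ) ∣ m then (D : ℂ) else 0 := by
    intro m
    have hrw : ∀ j ∈ Finset.range D, ω ^ ((j : ℤ) * m) = (ω ^ m) ^ j := by
      intro j _
      rw [← zpow_natCast (ω ^ m) j, ← zpow_mul, mul_comm]
    rw [Finset.sum_congr rfl hrw]
    by_cases h : (D : ℤ) ∣ m
    · have h1 : ω ^ m = 1 := (hprim.zpow_eq_one_iff_dvd m).mpr h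
      simp [h1, h]
    · have hne : ω ^ m ≠ 1 := fun hc => h ((hprim.zpow_eq_one_iff_dvd m).mp hc)
      rw [if_neg h, geom_sum_eq hne]
      have h2 : (ω ^ m) ^ D = 1 := by
        rw [← zpow_natCast (ω ^ m) D, ← zpow_mul, mul_comm, zpow_mul, zpow_natCast, hω1,
          one_zpow]
      rw [h2, sub_self, zero_div]
  -- periodicity mod D
  have hFper : ∀ a : ℤ, F a = F (a % (D : ℤ)) := by
    intro a
    have hP : Function.Periodic F (D : ℤ) := hF
    have h2 := (hP.int_mul (a / D)) (a % (D : ℤ))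
    push_cast at h2
    rw [mul_comm ((a / (D:ℤ))) ((D:ℤ)), Int.emod_add_mul_ediv a (D : ℤ)] at h2
    exact h2
  -- expand the binomial
  have hexp : ∀ j : ℕ, (1 + ω ^ (-(j : ℤ))) ^ n
      = ∑ l ∈ Finset.range (n + 1), (n.choose l : ℂ) * ω ^ (-((j : ℤ) * l)) := by
    intro j
    rw [add_comm, add_pow]
    refine Finset.sum_congr rfl fun l _ => ?_
    rw [one_pow, mul_one, ← zpow_natCast (ω ^ (-(j : ℤ))) l, ← zpow_mul]
    ring_nf
  -- main computation: rewrite RHS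
  rw [Finset.mul_sum]
  have step : ∀ t : ℕ, (1 / (D : ℂ)) * (ξ ^ F t *
      ∑ j ∈ Finset.range D, ω ^ (t * j) * (1 + ω ^ (-(j : ℤ))) ^ n)
      = ∑ l ∈ Finset.range (n + 1), (n.choose l : ℂ) * ξ ^ F t *
          ((1 / (D : ℂ)) * if (D : ℤ) ∣ ((t : ℤ) - l) then (D : ℂ) else 0) := by
    intro t
    have inner : ∑ j ∈ Finset.range D, ω ^ (t * j) * (1 + ω ^ (-(j : ℤ))) ^ n
        = ∑ l ∈ Finset.range (n + 1), (n.choose l : ℂ) *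
            (if (D : ℤ) ∣ ((t : ℤ) - l) then (D : ℂ) else 0) := by
      have h1 : ∀ j ∈ Finset.range D, ω ^ (t * j) * (1 + ω ^ (-(j : ℤ))) ^ n
          = ∑ l ∈ Finset.range (n + 1), (n.choose l : ℂ) * ω ^ ((j : ℤ) * ((t : ℤ) - l)) := by
        intro j _
        rw [hexp j, Finset.mul_sum]
        refine Finset.sum_congr rfl fun l _ => ?_
        rw [show ω ^ (t * j) = ω ^ ((t * j : ℕ) : ℤ) by rw [zpow_natCast],
          ← mul_assoc, mul_comm (ω ^ ((t * j : ℕ) : ℤ)) ((n.choose l : ℂ)), mul_assoc,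
          ← zpow_add₀ hωne]
        congr 2
        push_cast
        ring
      rw [Finset.sum_congr rfl h1, Finset.sum_comm]
      refine Finset.sum_congr rfl fun l _ => ?_
      rw [← Finset.mul_sum, key ((t : ℤ) - l)]
    rw [inner, Finset.mul_sum, Finset.mul_sum]
    refine Finset.sum_congr rfl fun l _ => ?_
    ring
  rw [Finset.sum_congr rfl fun t _ => step t, Finset.sum_comm]
  refine Finset.sum_congr rfl fun l hl => ?_
  -- now the sum over t of the indicator picks t = l % D
  have hlD : l % D ∈ Finset.range D := Finset.mem_range.mpr (Nat.mod_lt l hD)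
  have hzero : ∀ t ∈ Finset.range D, t ≠ l % D →
      (n.choose l : ℂ) * ξ ^ F t *
        ((1 / (D : ℂ)) * if (D : ℤ) ∣ ((t : ℤ) - l) then (D : ℂ) else 0) = 0 := by
    intro t ht htne
    have hnd : ¬ (D : ℤ) ∣ ((t : ℤ) - l) := by
      intro hdvd
      apply htne
      have hm : (l : ℤ) % D = (t : ℤ) % D := Int.modEq_iff_dvd.mpr hdvd
      have ht' : (t : ℤ) % D = t :=
        Int.emod_eq_of_lt (Int.natCast_nonneg t)
          (by exact_mod_cast Finset.mem_range.mp ht)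
      have : ((l % D : ℕ) : ℤ) = (t : ℤ) := by push_cast; rw [hm, ht']
      exact_mod_cast this.symm
    rw [if_neg hnd, mul_zero, mul_zero]
  rw [Finset.sum_eq_single_of_mem (l % D) hlD hzero]
  have hdvd : (D : ℤ) ∣ (((l % D : ℕ) : ℤ) - l) := by
    refine ⟨-((l : ℤ) / D), ?_⟩
    have h := Int.mul_ediv_add_emod (l : ℤ) D
    push_cast
    linarith
  have hFeq : F ((l % D : ℕ) : ℤ) = F l := by
    rw [show ((l % D : ℕ) : ℤ) = (l : ℤ) % D by push_cast; ring]
    exact (hFper l).symm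
  rw [if_pos hdvd, hFeq, one_div, inv_mul_cancel₀ hDne, mul_one]
end
end

section
/- Let F: Z^r → Z be periodic in each component with common period D (i.e., F(q_1, ..., q_j + D, ..., q_r) = F(q_1, ..., q_j, ..., q_r) for each j and all integers q_1, ..., q_r), and let ξ be a complex number with ξ^D = 1 (not necessarily primitive). Define S(n) = Σ_{q_1=0}^{n} Σ_{q_2=0}^{n−q_1} ... Σ_{q_r=0}^{n−q_1−...−q_{r−1}} C(n,q_1) C(n−q_1,q_2) ··· C(n−q_1−...−q_{r−1}, q_r) · ξ^{F(q_1,...,q_r)}. Then S(n) = (1/D^r) Σ_{b_r=0}^{D−1} ... Σ_{b_1=0}^{D−1} Σ_{j_1=0}^{D−1} ... Σ_{j_r=0}^{D−1} ξ^{F(b_1,...,b_r)} · ξ_D^{j_1 b_r + ... + j_r b_1} · λ_{j_1,...,j_r}^n, where ξ_D = exp(2πi/D) and λ_{j_1,...,j_r} = 1 + ξ_D^{−j_1} + ξ_D^{−j_2} + ... + ξ_D^{−j_r}. -/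
open Finset in
lemma sum_Iio_succ {M} [AddCommMonoid M] {r : ℕ} (f : Fin (r+1) → M) (i : Fin r) :
    ∑ j ∈ Finset.Iio i.succ, f j = f 0 + ∑ j ∈ Finset.Iio i, f j.succ := by
  have h : Finset.Iio i.succ = insert 0 ((Finset.Iio i).map (Fin.succEmb r)) := by
    ext j
    simp only [mem_Iio, mem_insert, mem_map, Fin.succEmb, Function.Embedding.coeFn_mk]
    constructor
    · intro hj
      rcases Fin.eq_zero_or_eq_succ j with h0 | ⟨k, rfl⟩
      · exact Or.inl h0
      · exact Or.inr ⟨k, by simpa [Fin.succ_lt_succ_iff] using hj, rfl⟩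
    · rintro (rfl | ⟨k, hk, rfl⟩)
      · exact Fin.succ_pos i
      · exact Fin.succ_lt_succ_iff.mpr hk
  rw [h, Finset.sum_insert (by simp [Fin.succEmb, Fin.succ_ne_zero]), Finset.sum_map]
  rfl

lemma Iio_zero_fin {r : ℕ} : (Finset.Iio (0 : Fin (r+1))) = ∅ := by
  ext j; simp

lemma mult_expand (r : ℕ) : ∀ (n : ℕ) (x : Fin r → ℂ),
    (1 + ∑ i, x i) ^ n =
      ∑ q ∈ (Fintype.piFinset fun _ : Fin r => Finset.range (n + 1)).filter
          (fun q => ∑ i, q i ≤ n),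
        (∏ i : Fin r, ((n - ∑ j ∈ Finset.Iio i, q j).choose (q i) : ℂ)) *
          ∏ i, x i ^ q i := by
  induction r with
  | zero => intro n x; simp
  | succ r ih =>
    intro n x
    rw [Fin.sum_univ_succ]
    have hbin : (1 + (x 0 + ∑ i : Fin r, x i.succ)) ^ n
        = ∑ k ∈ Finset.range (n+1),
            x 0 ^ k * (1 + ∑ i : Fin r, x i.succ) ^ (n - k) * (n.choose k : ℂ) := by
      rw [show (1 + (x 0 + ∑ i : Fin r, x i.succ))
            = x 0 + (1 + ∑ i : Fin r, x i.succ) by ring]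
      exact add_pow _ _ n
    rw [hbin]
    have : ∀ k ∈ Finset.range (n+1),
        x 0 ^ k * (1 + ∑ i : Fin r, x i.succ) ^ (n - k) * (n.choose k : ℂ)
        = ∑ q ∈ (Fintype.piFinset fun _ : Fin r => Finset.range (n - k + 1)).filter
              (fun q => ∑ i, q i ≤ n - k),
            x 0 ^ k *
              ((∏ i : Fin r, (((n - k) - ∑ j ∈ Finset.Iio i, q j).choose (q i) : ℂ)) *
                ∏ i, x i.succ ^ q i) * (n.choose k : ℂ) := by
      intro k _
      rw [ih (n - k) (fun i => x i.succ), Finset.mul_sum, Finset.sum_mul]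
    rw [Finset.sum_congr rfl this, Finset.sum_sigma']
    refine Finset.sum_bij' (fun p _ => Fin.cons p.1 p.2)
      (fun q _ => ⟨q 0, Fin.tail q⟩) ?_ ?_ ?_ ?_ ?_
    · rintro ⟨k, q⟩ hp
      simp only [Finset.mem_sigma, Finset.mem_range, Finset.mem_filter,
        Fintype.mem_piFinset, Finset.mem_range] at hp ⊢
      obtain ⟨hk, hq, hs⟩ := hp
      constructor
      · intro i
        refine Fin.cases ?_ ?_ i
        · simpa using hk
        · intro j
          simp only [Fin.cons_succ]
          have := hq j; omega
      · rw [Fin.sum_univ_succ]; simp only [Fin.cons_zero, Fin.cons_succ]; omega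
    · intro q hq
      simp only [Finset.mem_sigma, Finset.mem_range, Finset.mem_filter,
        Fintype.mem_piFinset, Finset.mem_range] at hq ⊢
      obtain ⟨hq1, hs⟩ := hq
      rw [Fin.sum_univ_succ] at hs
      have hsingle : ∀ i : Fin r, q i.succ ≤ ∑ j : Fin r, q j.succ := fun i =>
        Finset.single_le_sum (f := fun j : Fin r => q j.succ)
          (fun _ _ => Nat.zero_le _) (Finset.mem_univ i)
      refine ⟨by omega, fun i => ?_, ?_⟩
      · have := hsingle i; simp only [Fin.tail]; omega
      · simp only [Fin.tail]; omega
    · rintro ⟨k, q⟩ _; simp [Fin.tail, Fin.cons_succ]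
    · intro q _; exact Fin.cons_self_tail q
    · rintro ⟨k, q⟩ hp
      simp only [Fin.prod_univ_succ, Fin.cons_zero, Fin.cons_succ, Iio_zero_fin,
        Finset.sum_empty, Nat.sub_zero, sum_Iio_succ, Nat.sub_add_eq]
      ring


lemma xiD_pow_D {D : ℕ} (hD : 0 < D) {ξD : ℂ}
    (hξD : ξD = Complex.exp (2 * (Real.pi : ℂ) * Complex.I / D)) : ξD ^ D = 1 := by
  rw [hξD, ← Complex.exp_nat_mul]
  have hDne : (D:ℂ) ≠ 0 := Nat.cast_ne_zero.mpr hD.ne'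
  have : (D:ℂ) * (2 * (Real.pi:ℂ) * Complex.I / D) = 2 * (Real.pi:ℂ) * Complex.I := by
    field_simp
  rw [this, Complex.exp_two_pi_mul_I]

lemma xiD_eq_one_iff {D : ℕ} (hD : 0 < D) {ξD : ℂ}
    (hξD : ξD = Complex.exp (2 * (Real.pi : ℂ) * Complex.I / D)) (m : ℤ) :
    ξD ^ m = 1 ↔ (D:ℤ) ∣ m := by
  have hDne : (D:ℂ) ≠ 0 := Nat.cast_ne_zero.mpr hD.ne'
  have h2 : (2 * (Real.pi:ℂ) * Complex.I) ≠ 0 := by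
    simp [Real.pi_ne_zero, Complex.I_ne_zero]
  rw [hξD, show Complex.exp (2 * (Real.pi:ℂ) * Complex.I / D) ^ m
      = Complex.exp (m * (2 * (Real.pi:ℂ) * Complex.I / D)) from
      (Complex.exp_int_mul _ m).symm, Complex.exp_eq_one_iff]
  constructor
  · rintro ⟨k, hk⟩
    refine ⟨k, ?_⟩
    have : (m : ℂ) = (D:ℂ) * k := by
      field_simp at hk
      apply mul_right_cancel₀ h2
      rw [hk]
    exact_mod_cast this
  · rintro ⟨k, rfl⟩
    exact ⟨k, by push_cast; field_simp⟩

lemma ru_filter {D : ℕ} (hD : 0 < D) {ξD : ℂ}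
    (hξD : ξD = Complex.exp (2 * (Real.pi : ℂ) * Complex.I / D)) (m : ℤ) :
    ∑ j ∈ Finset.range D, ξD ^ ((j:ℤ) * m) = if (D:ℤ) ∣ m then (D:ℂ) else 0 := by
  by_cases h : (D:ℤ) ∣ m
  · rw [if_pos h]
    have : ∀ j ∈ Finset.range D, ξD ^ ((j:ℤ) * m) = 1 := by
      intro j _
      rw [mul_comm, zpow_mul, (xiD_eq_one_iff hD hξD m).mpr h, one_zpow]
    rw [Finset.sum_congr rfl this]; simp
  · rw [if_neg h]
    have hw : ξD ^ m ≠ 1 := fun hc => h ((xiD_eq_one_iff hD hξD m).mp hc)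
    have h1 : ∀ j ∈ Finset.range D, ξD ^ ((j:ℤ) * m) = (ξD ^ m) ^ j := by
      intro j _; rw [mul_comm, zpow_mul, zpow_natCast]
    rw [Finset.sum_congr rfl h1, geom_sum_eq hw]
    have : (ξD ^ m) ^ D = 1 := by
      rw [← zpow_natCast, ← zpow_mul, mul_comm, zpow_mul, zpow_natCast,
        xiD_pow_D hD hξD, one_zpow]
    rw [this]; simp

lemma F_shift {r D : ℕ} {F : (Fin r → ℤ) → ℤ}
    (hF : ∀ (q : Fin r → ℤ) (j : Fin r), F (Function.update q j (q j + D)) = F q)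
    (c : Fin r → ℤ) (j : Fin r) (m : ℕ) :
    F (Function.update c j (c j + D * m)) = F c := by
  induction m with
  | zero => simp
  | succ m ih =>
    have h1 : Function.update c j (c j + D * ((m+1 : ℕ) : ℤ))
        = Function.update (Function.update c j (c j + D * m)) j
            ((Function.update c j (c j + D * m)) j + D) := by
      rw [Function.update_idem, Function.update_self]
      congr 1; push_cast; ring
    rw [h1, hF, ih]

lemma F_mod {r D : ℕ} {F : (Fin r → ℤ) → ℤ}
    (hF : ∀ (q : Fin r → ℤ) (j : Fin r), F (Function.update q j (q j + D)) = F q)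
    (q : Fin r → ℕ) :
    F (fun i => (q i : ℤ)) = F (fun i => ((q i % D : ℕ) : ℤ)) := by
  have key : ∀ s : Finset (Fin r),
      F (fun i => if i ∈ s then ((q i % D : ℕ) : ℤ) + D * ((q i / D : ℕ) : ℤ)
          else ((q i % D : ℕ) : ℤ))
        = F (fun i => ((q i % D : ℕ) : ℤ)) := by
    intro s
    induction s using Finset.induction_on with
    | empty => simp
    | @insert a s ha ih =>
      have hfun : (fun i => if i ∈ insert a s then ((q i % D : ℕ) : ℤ) + D * ((q i / D : ℕ):ℤ)
            else ((q i % D : ℕ) : ℤ))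
          = Function.update
              (fun i => if i ∈ s then ((q i % D : ℕ) : ℤ) + D * ((q i / D : ℕ):ℤ)
                else ((q i % D : ℕ) : ℤ)) a
              ((fun i => if i ∈ s then ((q i % D : ℕ) : ℤ) + D * ((q i / D : ℕ):ℤ)
                else ((q i % D : ℕ) : ℤ)) a + D * ((q a / D : ℕ):ℤ)) := by
        funext i
        by_cases hia : i = a
        · subst hia
          simp [Function.update_self, ha]
        · simp [Function.update_of_ne hia, Finset.mem_insert, hia]
      rw [hfun, F_shift hF, ih]
  have h := key Finset.univ
  simp only [Finset.mem_univ, if_true] at h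
  rw [← h]
  congr 1
  funext i
  have := Nat.mod_add_div (q i) D
  push_cast
  push_cast at this ⊢
  linarith [this]

noncomputable section

open Finset

/-- Multinomial version: if `F : ℤ^r → ℤ` is periodic in each component with period `D` and
`ξ^D = 1`, then the multinomial sum
`S(n) = ∑_{q_1=0}^{n} ∑_{q_2=0}^{n-q_1} ⋯ C(n,q_1) C(n-q_1,q_2) ⋯ ξ^{F(q_1,…,q_r)}`
(encoded as a sum over tuples `q` with `q_1 + ⋯ + q_r ≤ n`) equals
`(1/D^r) ∑_{b,j} ξ^{F(b_1,…,b_r)} ξ_D^{j_1 b_r + ⋯ + j_r b_1} λ_{j_1,…,j_r}^n`,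
with `ξ_D = exp(2πi/D)` and `λ_{j_1,…,j_r} = 1 + ξ_D^{-j_1} + ⋯ + ξ_D^{-j_r}`. -/
theorem stmt9 (D : ℕ) (hD : 0 < D) (r : ℕ) (F : (Fin r → ℤ) → ℤ)
    (hF : ∀ (q : Fin r → ℤ) (j : Fin r), F (Function.update q j (q j + D)) = F q)
    (ξ : ℂ) (hξ : ξ ^ D = 1)
    (ξD : ℂ) (hξD : ξD = Complex.exp (2 * (Real.pi : ℂ) * Complex.I / D)) (n : ℕ) :
    (∑ q ∈ (Fintype.piFinset fun _ : Fin r => Finset.range (n + 1)).filter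
          (fun q => ∑ i, q i ≤ n),
        (∏ i : Fin r, ((n - ∑ j ∈ Finset.Iio i, q j).choose (q i) : ℂ)) *
          ξ ^ F (fun i => (q i : ℤ)))
      = (1 / (D : ℂ) ^ r) *
          ∑ b ∈ Fintype.piFinset fun _ : Fin r => Finset.range D,
            ∑ jj ∈ Fintype.piFinset fun _ : Fin r => Finset.range D,
              ξ ^ F (fun i => (b i : ℤ)) *
                ξD ^ (∑ i : Fin r, jj i * b (Fin.rev i)) *
                  (1 + ∑ i : Fin r, ξD ^ (-(jj i : ℤ))) ^ n := by
  have mult_expand := mult_expand r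
  have ru_filter := fun m => ru_filter hD hξD m
  have F_mod := fun q : Fin r → ℕ => F_mod hF q
  have hξDne : ξD ≠ 0 := by rw [hξD]; exact Complex.exp_ne_zero _
  have hDc : (D:ℂ) ≠ 0 := Nat.cast_ne_zero.mpr hD.ne'
  set P := Fintype.piFinset fun _ : Fin r => Finset.range D with hP
  set S := (Fintype.piFinset fun _ : Fin r => Finset.range (n + 1)).filter
      (fun q => ∑ i, q i ≤ n) with hS
  -- Step 1: reindex jj by Fin.rev
  have step1 : ∀ b : Fin r → ℕ,
      ∑ jj ∈ P, ξ ^ F (fun i => (b i : ℤ)) * ξD ^ (∑ i : Fin r, jj i * b (Fin.rev i)) *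
          (1 + ∑ i : Fin r, ξD ^ (-(jj i : ℤ))) ^ n
      = ∑ jj ∈ P, ξ ^ F (fun i => (b i : ℤ)) * ξD ^ (∑ i : Fin r, jj i * b i) *
          (1 + ∑ i : Fin r, ξD ^ (-(jj i : ℤ))) ^ n := by
    intro b
    refine Finset.sum_nbij' (fun jj => jj ∘ Fin.rev) (fun jj => jj ∘ Fin.rev) ?_ ?_ ?_ ?_ ?_
    · intro jj hjj
      simp only [hP, Fintype.mem_piFinset] at hjj ⊢
      exact fun i => hjj _
    · intro jj hjj
      simp only [hP, Fintype.mem_piFinset] at hjj ⊢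
      exact fun i => hjj _
    · intro jj _; funext i; simp [Fin.rev_rev]
    · intro jj _; funext i; simp [Fin.rev_rev]
    · intro jj _
      have e1 : ∑ i : Fin r, jj i * b (Fin.rev i) = ∑ i : Fin r, (jj ∘ Fin.rev) i * b i :=
        Fintype.sum_equiv (Fin.revPerm) _ _ (fun i => by simp [Fin.rev_rev])
      have e2 : ∑ i : Fin r, ξD ^ (-(jj i : ℤ)) = ∑ i : Fin r, ξD ^ (-((jj ∘ Fin.rev) i : ℤ)) :=
        Fintype.sum_equiv (Fin.revPerm) _ _ (fun i => by simp [Fin.rev_rev])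
      rw [e1, e2]
  -- Step 2: expand the power and combine exponents
  have step2 : ∀ b jj : Fin r → ℕ,
      ξ ^ F (fun i => (b i : ℤ)) * ξD ^ (∑ i : Fin r, jj i * b i) *
          (1 + ∑ i : Fin r, ξD ^ (-(jj i : ℤ))) ^ n
      = ∑ q ∈ S, ξ ^ F (fun i => (b i : ℤ)) *
          (∏ i : Fin r, ((n - ∑ j ∈ Finset.Iio i, q j).choose (q i) : ℂ)) *
          ∏ i : Fin r, ξD ^ ((jj i : ℤ) * ((b i : ℤ) - (q i : ℤ))) := by
    intro b jj
    rw [mult_expand n (fun i => ξD ^ (-(jj i : ℤ))), Finset.mul_sum]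
    refine Finset.sum_congr rfl fun q _ => ?_
    have hkey : ξD ^ (∑ i : Fin r, jj i * b i) * ∏ i : Fin r, (ξD ^ (-(jj i : ℤ))) ^ q i
        = ∏ i : Fin r, ξD ^ ((jj i : ℤ) * ((b i : ℤ) - (q i : ℤ))) := by
      rw [← Finset.prod_pow_eq_pow_sum, ← Finset.prod_mul_distrib]
      refine Finset.prod_congr rfl fun i _ => ?_
      rw [← zpow_natCast ξD (jj i * b i), ← zpow_natCast (ξD ^ (-(jj i : ℤ))) (q i),
        ← zpow_mul, ← zpow_add₀ hξDne]
      congr 1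
      push_cast
      ring
    calc ξ ^ F (fun i => (b i : ℤ)) * ξD ^ (∑ i : Fin r, jj i * b i) *
            ((∏ i : Fin r, ((n - ∑ j ∈ Finset.Iio i, q j).choose (q i) : ℂ)) *
              ∏ i : Fin r, (ξD ^ (-(jj i : ℤ))) ^ q i)
        = ξ ^ F (fun i => (b i : ℤ)) *
            (∏ i : Fin r, ((n - ∑ j ∈ Finset.Iio i, q j).choose (q i) : ℂ)) *
            (ξD ^ (∑ i : Fin r, jj i * b i) * ∏ i : Fin r, (ξD ^ (-(jj i : ℤ))) ^ q i) := by
          ring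
      _ = _ := by rw [hkey]
  -- Step 3: sum over jj factorizes, roots-of-unity filter
  have step3 : ∀ b : Fin r → ℕ, ∀ q : Fin r → ℕ,
      ∑ jj ∈ P, ξ ^ F (fun i => (b i : ℤ)) *
          (∏ i : Fin r, ((n - ∑ j ∈ Finset.Iio i, q j).choose (q i) : ℂ)) *
          ∏ i : Fin r, ξD ^ ((jj i : ℤ) * ((b i : ℤ) - (q i : ℤ)))
      = ξ ^ F (fun i => (b i : ℤ)) *
          (∏ i : Fin r, ((n - ∑ j ∈ Finset.Iio i, q j).choose (q i) : ℂ)) *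
          ∏ i : Fin r, (if (D:ℤ) ∣ ((b i : ℤ) - (q i : ℤ)) then (D:ℂ) else 0) := by
    intro b q
    have hps := Finset.prod_univ_sum (fun _ : Fin r => Finset.range D)
      (fun (i : Fin r) (j : ℕ) => ξD ^ ((j:ℤ) * ((b i : ℤ) - (q i : ℤ))))
    rw [← Finset.mul_sum, hP, ← hps]
    congr 1
    refine Finset.prod_congr rfl fun i _ => ?_
    exact ru_filter ((b i : ℤ) - (q i : ℤ))
  -- Step 4: sum over b picks out b = q % D
  have step4 : ∀ q : Fin r → ℕ,
      ∑ b ∈ P, ξ ^ F (fun i => (b i : ℤ)) *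
          (∏ i : Fin r, ((n - ∑ j ∈ Finset.Iio i, q j).choose (q i) : ℂ)) *
          ∏ i : Fin r, (if (D:ℤ) ∣ ((b i : ℤ) - (q i : ℤ)) then (D:ℂ) else 0)
      = (∏ i : Fin r, ((n - ∑ j ∈ Finset.Iio i, q j).choose (q i) : ℂ)) *
          ξ ^ F (fun i => (q i : ℤ)) * (D:ℂ) ^ r := by
    intro q
    have hb0 : (fun i => q i % D) ∈ P := by
      simp only [hP, Fintype.mem_piFinset, Finset.mem_range]
      exact fun i => Nat.mod_lt _ hD
    rw [Finset.sum_eq_single_of_mem (fun i => q i % D) hb0]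
    · have hdvd : ∀ i : Fin r, (D:ℤ) ∣ (((q i % D : ℕ) : ℤ) - (q i : ℤ)) := by
        intro i
        refine ⟨-((q i / D : ℕ) : ℤ), ?_⟩
        push_cast
        rw [Int.emod_def]
        ring
      have hprod : (∏ i : Fin r, (if (D:ℤ) ∣ (((q i % D : ℕ) : ℤ) - (q i : ℤ))
          then (D:ℂ) else 0)) = (D:ℂ) ^ r := by
        rw [Finset.prod_congr rfl (fun i _ => if_pos (hdvd i)), Finset.prod_const,
          Finset.card_univ, Fintype.card_fin]
      rw [hprod, F_mod q]
      ring
    · intro b hbP hbne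
      have : ∃ i : Fin r, b i ≠ q i % D := by
        by_contra hcon
        push_neg at hcon
        exact hbne (funext hcon)
      obtain ⟨i, hi⟩ := this
      have hbi : b i < D := by
        simp only [hP, Fintype.mem_piFinset, Finset.mem_range] at hbP
        exact hbP i
      have hnd : ¬ (D:ℤ) ∣ ((b i : ℤ) - (q i : ℤ)) := by
        intro hdvd
        apply hi
        have hmod : (b i : ℤ) % D = (q i : ℤ) % D := by
          have := Int.ModEq.symm (Int.modEq_iff_dvd.mpr hdvd)
          exact this
        rw [Int.emod_eq_of_lt (by positivity) (by exact_mod_cast hbi)] at hmod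
        have : ((q i : ℤ)) % D = ((q i % D : ℕ) : ℤ) := by push_cast; ring
        rw [this] at hmod
        exact_mod_cast hmod
      have hz : (if (D:ℤ) ∣ ((b i : ℤ) - (q i : ℤ)) then (D:ℂ) else 0) = 0 := if_neg hnd
      rw [mul_eq_zero]
      exact Or.inr (Finset.prod_eq_zero (Finset.mem_univ i) hz)
  -- Assemble
  have hmain : ∑ b ∈ P, ∑ jj ∈ P,
        ξ ^ F (fun i => (b i : ℤ)) * ξD ^ (∑ i : Fin r, jj i * b (Fin.rev i)) *
          (1 + ∑ i : Fin r, ξD ^ (-(jj i : ℤ))) ^ n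
      = ∑ q ∈ S, (∏ i : Fin r, ((n - ∑ j ∈ Finset.Iio i, q j).choose (q i) : ℂ)) *
          ξ ^ F (fun i => (q i : ℤ)) * (D:ℂ) ^ r := by
    calc ∑ b ∈ P, ∑ jj ∈ P,
          ξ ^ F (fun i => (b i : ℤ)) * ξD ^ (∑ i : Fin r, jj i * b (Fin.rev i)) *
            (1 + ∑ i : Fin r, ξD ^ (-(jj i : ℤ))) ^ n
        = ∑ b ∈ P, ∑ jj ∈ P, ∑ q ∈ S, ξ ^ F (fun i => (b i : ℤ)) *
            (∏ i : Fin r, ((n - ∑ j ∈ Finset.Iio i, q j).choose (q i) : ℂ)) *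
            ∏ i : Fin r, ξD ^ ((jj i : ℤ) * ((b i : ℤ) - (q i : ℤ))) := by
          refine Finset.sum_congr rfl fun b _ => ?_
          rw [step1 b]
          exact Finset.sum_congr rfl fun jj _ => step2 b jj
      _ = ∑ b ∈ P, ∑ q ∈ S, ξ ^ F (fun i => (b i : ℤ)) *
            (∏ i : Fin r, ((n - ∑ j ∈ Finset.Iio i, q j).choose (q i) : ℂ)) *
            ∏ i : Fin r, (if (D:ℤ) ∣ ((b i : ℤ) - (q i : ℤ)) then (D:ℂ) else 0) := by
          refine Finset.sum_congr rfl fun b _ => ?_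
          rw [Finset.sum_comm]
          exact Finset.sum_congr rfl fun q _ => step3 b q
      _ = ∑ q ∈ S, ∑ b ∈ P, ξ ^ F (fun i => (b i : ℤ)) *
            (∏ i : Fin r, ((n - ∑ j ∈ Finset.Iio i, q j).choose (q i) : ℂ)) *
            ∏ i : Fin r, (if (D:ℤ) ∣ ((b i : ℤ) - (q i : ℤ)) then (D:ℂ) else 0) :=
          Finset.sum_comm
      _ = _ := Finset.sum_congr rfl fun q _ => step4 q
  rw [hmain, Finset.mul_sum]
  refine Finset.sum_congr rfl fun q _ => ?_
  have hDr : ((D:ℂ)) ^ r ≠ 0 := pow_ne_zero _ hDc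
  field_simp
end
end

section
/- Let F: Z^r → Z be periodic in each component with common period D, let ξ be a complex number with ξ^D = 1, and define S(n) = Σ_{q_1=0}^{n} Σ_{q_2=0}^{n−q_1} ... Σ_{q_r=0}^{n−q_1−...−q_{r−1}} C(n,q_1) C(n−q_1,q_2) ··· C(n−q_1−...−q_{r−1}, q_r) · ξ^{F(q_1,...,q_r)}. Then the sequence (S(n)) satisfies the linear recurrence with integer coefficients whose characteristic polynomial is P_S(X) = Π_{a_1=0}^{D−1} Π_{0 ≤ a_2 ≤ a_1} ··· Π_{0 ≤ a_r ≤ a_{r−1}} (X − (1 + ξ_D^{a_1} + ... + ξ_D^{a_r})), where ξ_D = exp(2πi/D); i.e., P_S(X) has integer coefficients and, writing P_S(X) = X^d − c_1 X^{d−1} − ... − c_d, one has S(n+d) = c_1 S(n+d−1) + ... + c_d S(n) for all n ≥ 0. -/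
noncomputable section

open Polynomial
open Finset



lemma iio_succ_sum {r : ℕ} (g : Fin (r+1) → ℕ) (i : Fin r) :
    ∑ j ∈ Finset.Iio i.succ, g j = g 0 + ∑ j ∈ Finset.Iio i, g j.succ := by
  have h1 : (Finset.Iio i.succ) = Finset.univ.filter (· < i.succ) := by ext j; simp
  have h2 : (Finset.Iio i) = Finset.univ.filter (· < i) := by ext j; simp
  rw [h1, h2, Finset.sum_filter, Finset.sum_filter, Fin.sum_univ_succ]
  simp [Fin.succ_pos, Fin.succ_lt_succ_iff]

lemma multi_thm : ∀ (r : ℕ) (n : ℕ) (x : Fin r → ℂ),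
    ∑ q ∈ (Fintype.piFinset fun _ : Fin r => Finset.range (n + 1)).filter
        (fun q => ∑ i, q i ≤ n),
      (∏ i : Fin r, ((n - ∑ j ∈ Finset.Iio i, q j).choose (q i) : ℂ)) *
        ∏ i, x i ^ q i
    = (1 + ∑ i, x i) ^ n := by
  intro r
  induction r with
  | zero => intro n x; simp
  | succ r ih =>
    intro n x
    rw [show ((Fintype.piFinset fun _ : Fin (r+1) => Finset.range (n + 1)).filter
        (fun q => ∑ i, q i ≤ n)) = ((Finset.range (n+1)).sigma (fun q0 =>
          (Fintype.piFinset fun _ : Fin r => Finset.range (n - q0 + 1)).filter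
            (fun q' => ∑ i, q' i ≤ n - q0))).image (fun p => Fin.cons p.1 p.2) from ?_]
    · rw [Finset.sum_image ?inj]
      case inj =>
        rintro ⟨a, f⟩ ha ⟨b, g⟩ hb h
        have h0 : a = b := by
          have := congrFun h 0; simpa using this
        subst h0
        have : f = g := by
          funext i; have := congrFun h i.succ; simpa using this
        simp [this]
      have hterm : ∀ q0 ∈ Finset.range (n+1), ∀ q' : Fin r → ℕ,
          (∏ i : Fin (r+1), ((n - ∑ j ∈ Finset.Iio i, (Fin.cons q0 q' : Fin (r+1) → ℕ) j).choose
              ((Fin.cons q0 q' : Fin (r+1) → ℕ) i) : ℂ)) *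
            ∏ i : Fin (r+1), x i ^ (Fin.cons q0 q' : Fin (r+1) → ℕ) i
          = ((n.choose q0 : ℂ) * x 0 ^ q0) *
            ((∏ i : Fin r, (((n - q0) - ∑ j ∈ Finset.Iio i, q' j).choose (q' i) : ℂ)) *
              ∏ i : Fin r, (x ∘ Fin.succ) i ^ q' i) := by
        intro q0 _ q'
        rw [Fin.prod_univ_succ, Fin.prod_univ_succ]
        have h0 : ∑ j ∈ Finset.Iio (0 : Fin (r+1)), (Fin.cons q0 q' : Fin (r+1) → ℕ) j = 0 := by
          have he : Finset.Iio (0 : Fin (r+1)) = ∅ := by ext j; simp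
          simp [he]
        have hsucc : ∀ i : Fin r,
            ∑ j ∈ Finset.Iio i.succ, (Fin.cons q0 q' : Fin (r+1) → ℕ) j
              = q0 + ∑ j ∈ Finset.Iio i, q' j := by
          intro i
          rw [iio_succ_sum]
          simp
        have hprod : ∀ i : Fin r,
            (n - ∑ j ∈ Finset.Iio i.succ, (Fin.cons q0 q' : Fin (r+1) → ℕ) j)
              = (n - q0) - ∑ j ∈ Finset.Iio i, q' j := by
          intro i; rw [hsucc i, ← Nat.sub_sub]
        simp only [h0, Fin.cons_zero, Fin.cons_succ, Nat.sub_zero, Function.comp_apply]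
        rw [Finset.prod_congr rfl (fun i _ => by rw [hprod i])]
        ring
      have hinner : ∀ q0 ∈ Finset.range (n+1),
          (∑ q' ∈ (Fintype.piFinset fun _ : Fin r => Finset.range (n - q0 + 1)).filter
              (fun q' => ∑ i, q' i ≤ n - q0),
            (∏ i : Fin (r+1), ((n - ∑ j ∈ Finset.Iio i, (Fin.cons q0 q' : Fin (r+1) → ℕ) j).choose
                ((Fin.cons q0 q' : Fin (r+1) → ℕ) i) : ℂ)) *
              ∏ i : Fin (r+1), x i ^ (Fin.cons q0 q' : Fin (r+1) → ℕ) i)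
          = ((n.choose q0 : ℂ) * x 0 ^ q0) * (1 + ∑ i : Fin r, x i.succ) ^ (n - q0) := by
        intro q0 hq0
        rw [Finset.sum_congr rfl (fun q' _ => hterm q0 hq0 q')]
        rw [← Finset.mul_sum, ih (n - q0) (x ∘ Fin.succ)]
        rfl
      rw [Finset.sum_sigma]
      rw [Finset.sum_congr rfl hinner]
      have hY : (1 : ℂ) + ∑ i : Fin (r+1), x i = x 0 + (1 + ∑ i : Fin r, x i.succ) := by
        rw [Fin.sum_univ_succ]; ring
      rw [hY, add_pow]
      apply Finset.sum_congr rfl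
      intro k hk
      ring
    · ext q
      simp only [Finset.mem_image, Finset.mem_sigma, Finset.mem_filter, Fintype.mem_piFinset,
        Finset.mem_range]
      constructor
      · rintro ⟨hq, hsum⟩
        have hsplit : ∑ i : Fin (r+1), q i = q 0 + ∑ i : Fin r, q i.succ := Fin.sum_univ_succ q
        have h0n : q 0 ≤ n := by
          have : q 0 ≤ ∑ i : Fin (r+1), q i := Finset.single_le_sum (fun i _ => Nat.zero_le _)
            (Finset.mem_univ 0)
          omega
        have htail : ∑ i : Fin r, q i.succ ≤ n - q 0 := by omega
        have h2 : ∀ i : Fin r, q i.succ < n - q 0 + 1 := by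
          intro i
          have : q i.succ ≤ ∑ i : Fin r, q i.succ :=
            Finset.single_le_sum (f := fun i : Fin r => q i.succ)
              (fun i _ => Nat.zero_le _) (Finset.mem_univ i)
          omega
        exact ⟨⟨q 0, fun i => q i.succ⟩, ⟨show q 0 < n + 1 by omega, h2, htail⟩, Fin.cons_self_tail q⟩
      · rintro ⟨⟨q0, q'⟩, ⟨hq0, hq', hsum'⟩, rfl⟩
        dsimp only at hq0 hq' hsum' ⊢
        have hq0n : q0 ≤ n := by omega
        constructor
        · intro i
          refine Fin.cases ?_ ?_ i
          · simpa using hq0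
          · intro j
            have := hq' j
            simp only [Fin.cons_succ]
            omega
        · rw [Fin.sum_cons]
          omega


lemma orth_s11 (D : ℕ) (hD : 0 < D) (t : ℂ) (ht : t ^ D = 1) :
    ∑ b ∈ Finset.range D, t ^ b = if t = 1 then (D : ℂ) else 0 := by
  split_ifs with h
  · subst h; simp
  · have := geom_sum_eq h D
    rw [this, ht]
    simp

lemma charsum (D r : ℕ) (hD : 0 < D) (ξD : ℂ) (hprim : IsPrimitiveRoot ξD D)
    (q c : Fin r → ℕ) (hc : ∀ i, c i < D) :
    ∑ b ∈ (Fintype.piFinset fun _ : Fin r => Finset.range D),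
        ∏ i, (ξD ^ (b i * q i) * (ξD ^ (b i * c i))⁻¹)
      = if (∀ i, q i % D = c i) then ((D : ℂ) ^ r) else 0 := by
  have hne : ξD ≠ 0 := hprim.ne_zero hD.ne'
  have h1 : ξD ^ D = 1 := hprim.pow_eq_one
  have hpowmod : ∀ m : ℕ, ξD ^ m = ξD ^ (m % D) := by
    intro m
    conv_lhs => rw [← Nat.div_add_mod m D]
    rw [pow_add, pow_mul, h1, one_pow, one_mul]
  rw [← Finset.prod_univ_sum (fun _ : Fin r => Finset.range D)
    (fun i m => ξD ^ (m * q i) * (ξD ^ (m * c i))⁻¹)]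
  have hfac : ∀ i : Fin r,
      (∑ b ∈ Finset.range D, ξD ^ (b * q i) * (ξD ^ (b * c i))⁻¹)
        = if q i % D = c i then (D : ℂ) else 0 := by
    intro i
    have hrw : ∀ b : ℕ, ξD ^ (b * q i) * (ξD ^ (b * c i))⁻¹
        = (ξD ^ (q i) * (ξD ^ (c i))⁻¹) ^ b := by
      intro b
      rw [mul_pow, mul_comm b (q i), mul_comm b (c i), pow_mul, pow_mul, inv_pow]
    rw [Finset.sum_congr rfl (fun b _ => hrw b)]
    have ht : (ξD ^ (q i) * (ξD ^ (c i))⁻¹) ^ D = 1 := by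
      rw [← hrw D, pow_mul, h1, one_pow, pow_mul, h1, one_pow, inv_one, mul_one]
    rw [orth_s11 D hD _ ht]
    congr 1
    rw [eq_iff_iff]
    constructor
    · intro h
      have hpow : ξD ^ (q i) = ξD ^ (c i) := by
        field_simp at h
        exact h
      have : ξD ^ (q i % D) = ξD ^ (c i % D) := by
        rw [← hpowmod, ← hpowmod, hpow]
      have := hprim.pow_inj (Nat.mod_lt _ hD) (Nat.mod_lt _ hD) this
      rw [this, Nat.mod_eq_of_lt (hc i)]
    · intro h
      have hpow : ξD ^ (q i) = ξD ^ (c i) := by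
        rw [hpowmod (q i), h, ← Nat.mod_eq_of_lt (hc i), ← hpowmod]
      rw [hpow, mul_inv_cancel₀ (pow_ne_zero _ hne)]
  rw [Finset.prod_congr rfl (fun i _ => hfac i)]
  by_cases h : ∀ i, q i % D = c i
  · rw [if_pos h, Finset.prod_congr rfl (fun i _ => if_pos (h i)), Finset.prod_const,
      Finset.card_univ, Fintype.card_fin]
  · push_neg at h
    obtain ⟨i, hi⟩ := h
    rw [if_neg (by push_neg; exact ⟨i, hi⟩)]
    exact Finset.prod_eq_zero (Finset.mem_univ i) (if_neg hi)

lemma fourier_expand (D r : ℕ) (hD : 0 < D) (ξD : ℂ) (hprim : IsPrimitiveRoot ξD D)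
    (G : (Fin r → ℕ) → ℂ) (hG : ∀ q, G q = G (fun i => q i % D)) (q : Fin r → ℕ) :
    G q = ∑ b ∈ (Fintype.piFinset fun _ : Fin r => Finset.range D),
      (∑ c ∈ (Fintype.piFinset fun _ : Fin r => Finset.range D),
          G c * ((D : ℂ) ^ r)⁻¹ * ∏ i, (ξD ^ (b i * c i))⁻¹) *
        ∏ i, (ξD ^ (b i)) ^ (q i) := by
  have hDne : ((D : ℂ) ^ r) ≠ 0 := pow_ne_zero _ (Nat.cast_ne_zero.2 hD.ne')
  -- swap to sum over c first
  simp only [Finset.sum_mul]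
  rw [Finset.sum_comm]
  have hterm : ∀ c ∈ (Fintype.piFinset fun _ : Fin r => Finset.range D),
      (∑ b ∈ (Fintype.piFinset fun _ : Fin r => Finset.range D),
        G c * ((D : ℂ) ^ r)⁻¹ * (∏ i, (ξD ^ (b i * c i))⁻¹) * ∏ i, (ξD ^ (b i)) ^ (q i))
      = if (∀ i, q i % D = c i) then G c else 0 := by
    intro c hc
    have hc' : ∀ i, c i < D := by
      intro i
      have := (Fintype.mem_piFinset.1 hc) i
      simpa using this
    have : ∀ b : Fin r → ℕ,
        G c * ((D : ℂ) ^ r)⁻¹ * (∏ i, (ξD ^ (b i * c i))⁻¹) * ∏ i, (ξD ^ (b i)) ^ (q i)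
        = G c * ((D : ℂ) ^ r)⁻¹ * ∏ i, (ξD ^ (b i * q i) * (ξD ^ (b i * c i))⁻¹) := by
      intro b
      rw [Finset.prod_mul_distrib]
      have : ∀ i, (ξD ^ (b i)) ^ (q i) = ξD ^ (b i * q i) := fun i => (pow_mul ξD (b i) (q i)).symm
      rw [Finset.prod_congr rfl (fun i _ => this i)]
      ring
    rw [Finset.sum_congr rfl (fun b _ => this b), ← Finset.mul_sum,
      charsum D r hD ξD hprim q c hc']
    split_ifs with h
    · field_simp
    · ring
  rw [Finset.sum_congr rfl hterm]
  have hmem : (fun i => q i % D) ∈ (Fintype.piFinset fun _ : Fin r => Finset.range D) := by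
    rw [Fintype.mem_piFinset]
    intro i
    simp [Nat.mod_lt _ hD]
  simp only [show ∀ c : Fin r → ℕ, (∀ i, q i % D = c i) = ((fun i => q i % D) = c) from
    fun c => propext ⟨funext, fun h i => congrFun h i⟩]
  rw [Finset.sum_ite_eq _ (fun i => q i % D) G, if_pos hmem]
  exact hG q



def sortD {r : ℕ} (b : Fin r → ℕ) : Fin r → ℕ := (b ∘ Tuple.sort b) ∘ Fin.rev

lemma sortD_eq_comp {r : ℕ} (b : Fin r → ℕ) :
    ∃ π : Equiv.Perm (Fin r), sortD b = b ∘ π :=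
  ⟨(Fin.revPerm).trans (Tuple.sort b), rfl⟩

lemma sortD_antitone {r : ℕ} (b : Fin r → ℕ) :
    ∀ i i' : Fin r, i ≤ i' → sortD b i' ≤ sortD b i := by
  intro i i' h
  exact Tuple.monotone_sort b (by rw [Fin.rev_le_rev]; exact h)

lemma sortD_comp_perm {r : ℕ} (b : Fin r → ℕ) (π : Equiv.Perm (Fin r)) :
    sortD (b ∘ π) = sortD b := by
  unfold sortD
  rw [Tuple.comp_perm_comp_sort_eq_comp_sort]

lemma sortD_of_antitone {r : ℕ} (b : Fin r → ℕ)
    (hb : ∀ i i' : Fin r, i ≤ i' → b i' ≤ b i) : sortD b = b := by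
  have hmono : Monotone (b ∘ (Fin.revPerm : Equiv.Perm (Fin r))) := by
    intro i i' h
    exact hb _ _ (show Fin.rev i' ≤ Fin.rev i by rw [Fin.rev_le_rev]; exact h)
  have h1 : b ∘ (Fin.revPerm : Equiv.Perm (Fin r)) = b ∘ Tuple.sort b :=
    Tuple.comp_sort_eq_comp_iff_monotone.mpr hmono
  funext i
  change (b ∘ Tuple.sort b) (Fin.rev i) = b i
  rw [← h1]
  simp

lemma intCoeffs (D : ℕ) (hD : 0 < D) (r : ℕ) (ξD : ℂ) (hprim : IsPrimitiveRoot ξD D)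
    (A : Finset (Fin r → ℕ))
    (hA : A = (Fintype.piFinset fun _ : Fin r => Finset.range D).filter
      (fun a => ∀ i i' : Fin r, i ≤ i' → a i' ≤ a i))
    (P : Polynomial ℂ)
    (hP : P = ∏ a ∈ A, (X - C (1 + ∑ i : Fin r, ξD ^ (a i)))) :
    ∀ i, ∃ z : ℤ, P.coeff i = (z : ℂ) := by
  haveI : NeZero D := ⟨hD.ne'⟩
  set Dp : ℕ+ := ⟨D, hD⟩ with hDp
  haveI : NeZero (Dp : ℕ) := ⟨hD.ne'⟩
  set K := CyclotomicField Dp ℚ with hK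
  haveI : IsCyclotomicExtension {(Dp : ℕ)} ℚ K :=
    CyclotomicField.isCyclotomicExtension (Dp : ℕ) ℚ
  set ζ : K := IsCyclotomicExtension.zeta Dp ℚ K with hζdef
  have hζ' : IsPrimitiveRoot ζ (Dp : ℕ) := IsCyclotomicExtension.zeta_spec Dp ℚ K
  have hζ : IsPrimitiveRoot ζ D := hζ'
  have hirr : Irreducible (cyclotomic D ℚ) := Polynomial.cyclotomic.irreducible_rat hD
  have hmin : minpoly ℚ ζ = cyclotomic D ℚ :=
    (hζ.minpoly_eq_cyclotomic_of_irreducible hirr).symm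
  set pb := hζ'.powerBasis ℚ with hpb
  have hgen : pb.gen = ζ := by rw [hpb, IsPrimitiveRoot.powerBasis_gen]
  have hrootξ : (Polynomial.aeval ξD) (minpoly ℚ pb.gen) = 0 := by
    rw [hgen, hmin, aeval_def, eval₂_eq_eval_map, map_cyclotomic]
    exact hprim.isRoot_cyclotomic hD
  set φ : K →ₐ[ℚ] ℂ := pb.lift ξD hrootξ with hφ
  have hφζ : φ ζ = ξD := by rw [hφ, ← hgen]; exact pb.lift_gen ξD hrootξ
  set PK : Polynomial K := ∏ a ∈ A, (X - C (1 + ∑ i : Fin r, ζ ^ (a i))) with hPK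
  have hmapPK : PK.map (φ : K →+* ℂ) = P := by
    rw [hPK, hP, Polynomial.map_prod]
    refine Finset.prod_congr rfl fun a _ => ?_
    rw [Polynomial.map_sub, Polynomial.map_X, Polynomial.map_C]
    congr 1
    rw [show ((φ : K →+* ℂ) (1 + ∑ i : Fin r, ζ ^ (a i)))
        = φ (1 + ∑ i : Fin r, ζ ^ (a i)) from rfl]
    simp only [map_add, map_one, map_sum, map_pow, hφζ]
  -- integrality of PK coefficients
  have hζint : IsIntegral ℤ ζ := by
    refine ⟨X ^ D - 1, monic_X_pow_sub_C (1 : ℤ) hD.ne', ?_⟩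
    simp [hζ.pow_eq_one]
  have hPKint : ∀ i, IsIntegral ℤ (PK.coeff i) := by
    intro i
    have hval : ∀ a : Fin r → ℕ,
        (1 + ∑ j : Fin r, ζ ^ (a j)) ∈ integralClosure ℤ K := by
      intro a
      exact Subalgebra.add_mem _ (Subalgebra.one_mem _)
        (Subalgebra.sum_mem _ fun j _ => Subalgebra.pow_mem _ hζint _)
    set Q : Polynomial (integralClosure ℤ K) :=
      ∏ a ∈ A, (X - C (⟨1 + ∑ j : Fin r, ζ ^ (a j), hval a⟩ : integralClosure ℤ K)) with hQ
    have hQmap : Q.map (algebraMap (integralClosure ℤ K) K) = PK := by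
      rw [hQ, hPK, Polynomial.map_prod]
      refine Finset.prod_congr rfl fun a _ => ?_
      rw [Polynomial.map_sub, Polynomial.map_X, Polynomial.map_C]
      rfl
    have : PK.coeff i = algebraMap (integralClosure ℤ K) K (Q.coeff i) := by
      rw [← hQmap, Polynomial.coeff_map]
    rw [this]
    exact (Q.coeff i).2
  -- Galois invariance
  haveI : IsGalois ℚ K := IsCyclotomicExtension.isGalois {(Dp : ℕ)} ℚ K
  haveI : FiniteDimensional ℚ K := IsCyclotomicExtension.finiteDimensional {(Dp : ℕ)} ℚ K
  have hpowmod : ∀ m : ℕ, ζ ^ m = ζ ^ (m % D) := by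
    intro m
    conv_lhs => rw [← Nat.div_add_mod m D]
    rw [pow_add, pow_mul, hζ.pow_eq_one, one_pow, one_mul]
  have hAmem : ∀ a ∈ A, (∀ j, a j < D) ∧ (∀ i i' : Fin r, i ≤ i' → a i' ≤ a i) := by
    intro a ha
    rw [hA, Finset.mem_filter, Fintype.mem_piFinset] at ha
    exact ⟨fun j => by have := ha.1 j; simpa using this, ha.2⟩
  have hmemA : ∀ a : Fin r → ℕ, (∀ j, a j < D) →
      (∀ i i' : Fin r, i ≤ i' → a i' ≤ a i) → a ∈ A := by
    intro a h1 h2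
    rw [hA, Finset.mem_filter, Fintype.mem_piFinset]
    exact ⟨fun j => by simpa using h1 j, h2⟩
  have hfix : ∀ (σ : K ≃ₐ[ℚ] K) (i : ℕ), σ (PK.coeff i) = PK.coeff i := by
    intro σ i
    suffices hPS : PK.map (σ : K →+* K) = PK by
      conv_rhs => rw [← hPS]
      rw [Polynomial.coeff_map]
      rfl
    have hσζprim : IsPrimitiveRoot (σ ζ) D := hζ.map_of_injective σ.injective
    obtain ⟨k, hkD, hkcop, hk⟩ := hζ.isPrimitiveRoot_iff.mp hσζprim
    set u : (ZMod D)ˣ := ZMod.unitOfCoprime k hkcop with hu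
    set k' : ℕ := ((u⁻¹ : (ZMod D)ˣ) : ZMod D).val with hk'
    have h2 : (k : ZMod D) * (k' : ZMod D) = 1 := by
      rw [hk', ZMod.natCast_val, ZMod.cast_id, ← ZMod.coe_unitOfCoprime k hkcop, ← hu,
        ← Units.val_mul, mul_inv_cancel, Units.val_one]
    have hmodinv : ∀ c : ℕ, ∀ m : ℕ, (c : ZMod D) * (m : ZMod D) = 1 → ∀ x : ℕ, x < D →
        (m * ((c * x) % D)) % D = x := by
      intro c m hcm x hx
      have h1 : ((m * ((c * x) % D) : ℕ) : ZMod D) = ((x : ℕ) : ZMod D) := by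
        push_cast [ZMod.natCast_mod]
        rw [← mul_assoc, mul_comm (m : ZMod D) (c : ZMod D), hcm, one_mul]
      rw [ZMod.natCast_eq_natCast_iff'] at h1
      rwa [Nat.mod_eq_of_lt hx] at h1
    have hσval : ∀ a : Fin r → ℕ,
        σ (1 + ∑ j : Fin r, ζ ^ (a j)) = 1 + ∑ j : Fin r, ζ ^ ((k * a j) % D) := by
      intro a
      simp only [map_add, map_one, map_sum, map_pow]
      congr 1
      refine Finset.sum_congr rfl fun j _ => ?_
      rw [← hk, ← pow_mul, hpowmod]
    -- the sorted multiplication maps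
    have hgval : ∀ c : ℕ, ∀ a : Fin r → ℕ,
        ∑ j : Fin r, ζ ^ (sortD (fun j => (c * a j) % D) j)
          = ∑ j : Fin r, ζ ^ ((c * a j) % D) := by
      intro c a
      obtain ⟨π, hπ⟩ := sortD_eq_comp (fun j => (c * a j) % D)
      rw [hπ]
      exact Equiv.sum_comp π (fun j => ζ ^ ((c * a j) % D))
    have hgmem : ∀ c : ℕ, ∀ a ∈ A, sortD (fun j => (c * a j) % D) ∈ A := by
      intro c a _
      refine hmemA _ (fun j => ?_) (sortD_antitone _)
      obtain ⟨π, hπ⟩ := sortD_eq_comp (fun j => (c * a j) % D)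
      rw [hπ]
      exact Nat.mod_lt _ hD
    have hginv : ∀ (c m : ℕ), (c : ZMod D) * (m : ZMod D) = 1 → ∀ a ∈ A,
        sortD (fun j => (m * (sortD (fun j => (c * a j) % D) j)) % D) = a := by
      intro c m hcm a ha
      obtain ⟨π, hπ⟩ := sortD_eq_comp (fun j => (c * a j) % D)
      have : (fun j => (m * (sortD (fun j => (c * a j) % D) j)) % D)
          = (fun j => (m * ((c * a j) % D)) % D) ∘ π := by
        funext j
        rw [hπ]
        rfl
      rw [this, sortD_comp_perm]
      have : (fun j => (m * ((c * a j) % D)) % D) = a := by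
        funext j
        exact hmodinv c m hcm (a j) ((hAmem a ha).1 j)
      rw [this]
      exact sortD_of_antitone a (hAmem a ha).2
    have h2' : (k' : ZMod D) * (k : ZMod D) = 1 := by rw [mul_comm]; exact h2
    rw [hPK, Polynomial.map_prod]
    have hfac : ∀ a ∈ A, (X - C (1 + ∑ j : Fin r, ζ ^ (a j))).map (σ : K →+* K)
        = X - C (1 + ∑ j : Fin r, ζ ^ ((k * a j) % D)) := by
      intro a _
      rw [Polynomial.map_sub, Polynomial.map_X, Polynomial.map_C]
      exact congrArg (fun z => X - C z) (hσval a)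
    rw [Finset.prod_congr rfl hfac]
    refine Finset.prod_nbij' (fun a => sortD (fun j => (k * a j) % D))
      (fun a => sortD (fun j => (k' * a j) % D))
      (fun a ha => hgmem k a ha) (fun a ha => hgmem k' a ha)
      (fun a ha => hginv k k' h2 a ha) ?_ ?_
    · intro a ha
      have := hginv k' k h2' a ha
      exact this
    · intro a _
      rw [hgval k a]
  intro i
  have hbot : PK.coeff i ∈ (⊥ : IntermediateField ℚ K) := by
    have h1 : IntermediateField.fixedField (⊤ : Subgroup (K ≃ₐ[ℚ] K)) = ⊥ := by
      rw [← IntermediateField.fixingSubgroup_bot (F := ℚ) (E := K), IsGalois.fixedField_fixingSubgroup ⊥]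
    rw [← h1]
    rintro ⟨g, -⟩
    exact hfix g i
  rw [IntermediateField.mem_bot] at hbot
  obtain ⟨q, hq⟩ := hbot
  have hqint : IsIntegral ℤ q := by
    have := hPKint i
    rw [← hq] at this
    exact IsIntegral.tower_bot_of_field this
  obtain ⟨z, hz⟩ := IsIntegrallyClosed.isIntegral_iff.mp hqint
  refine ⟨z, ?_⟩
  have : P.coeff i = φ (PK.coeff i) := by rw [← hmapPK, Polynomial.coeff_map]; rfl
  rw [this, ← hq, AlgHom.commutes, ← hz]
  simp


lemma Fmod_aux {r : ℕ} (D : ℕ) (F : (Fin r → ℤ) → ℤ)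
    (hF : ∀ (q : Fin r → ℤ) (j : Fin r), F (Function.update q j (q j + D)) = F q) :
    ∀ (m : ℕ) (w : Fin r → ℤ) (j : Fin r),
      F (Function.update w j (w j + m * D)) = F w := by
  intro m
  induction m with
  | zero => intro w j; simp
  | succ m ih =>
    intro w j
    have h1 : Function.update w j (w j + (m + 1 : ℕ) * D)
        = Function.update (Function.update w j (w j + m * D)) j
            ((Function.update w j (w j + m * D)) j + D) := by
      rw [Function.update_self, Function.update_idem]
      congr 1
      push_cast
      ring
    rw [h1, hF, ih]

lemma Fmod {r : ℕ} (D : ℕ) (hD : 0 < D) (F : (Fin r → ℤ) → ℤ)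
    (hF : ∀ (q : Fin r → ℤ) (j : Fin r), F (Function.update q j (q j + D)) = F q)
    (q : Fin r → ℕ) :
    F (fun i => (q i : ℤ)) = F (fun i => ((q i % D : ℕ) : ℤ)) := by
  have key : ∀ s : Finset (Fin r),
      F (fun i => if i ∈ s then ((q i % D : ℕ) : ℤ) else (q i : ℤ))
        = F (fun i => (q i : ℤ)) := by
    intro s
    induction s using Finset.induction_on with
    | empty => simp
    | @insert j s hj ih =>
      set w : Fin r → ℤ := fun i => if i ∈ s then ((q i % D : ℕ) : ℤ) else (q i : ℤ) with hw
      have h1 : (fun i => if i ∈ insert j s then ((q i % D : ℕ) : ℤ) else (q i : ℤ))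
          = Function.update w j ((q j % D : ℕ) : ℤ) := by
        funext i
        by_cases hij : i = j
        · subst hij; simp
        · rw [Function.update_of_ne hij]
          simp [hw, Finset.mem_insert, hij]
      have h2 : Function.update w j (((q j % D : ℕ) : ℤ) + ((q j / D : ℕ) : ℤ) * (D : ℤ))
          = w := by
        have hwj : w j = (q j : ℤ) := by simp [hw, hj]
        have : ((q j % D : ℕ) : ℤ) + ((q j / D : ℕ) : ℤ) * (D : ℤ) = (q j : ℤ) := by
          exact_mod_cast Nat.mod_add_div' (q j) D
        rw [this, ← hwj, Function.update_eq_self]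
      have h3 : F (Function.update w j ((q j % D : ℕ) : ℤ)) = F w := by
        have := Fmod_aux D F hF (q j / D) (Function.update w j ((q j % D : ℕ) : ℤ)) j
        rw [Function.update_self, Function.update_idem] at this
        rw [← this, h2]
      rw [h1, h3, ih]
  have := key Finset.univ
  simp only [Finset.mem_univ, if_true] at this
  exact this.symm

/-- The sequence `S(n)` of multinomial sums satisfies the linear recurrence with integer
coefficients whose characteristic polynomial is
`P_S(X) = ∏_{a_1=0}^{D-1} ∏_{0≤a_2≤a_1} ⋯ ∏_{0≤a_r≤a_{r-1}} (X - (1 + ξ_D^{a_1} + ⋯ + ξ_D^{a_r}))`: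
`P_S` has integer coefficients, and writing `P_S(X) = X^d - c_1 X^{d-1} - ⋯ - c_d`
(so `c_i = -(coeff of P_S at degree d - i)`), one has
`S(n+d) = c_1 S(n+d-1) + ⋯ + c_d S(n)` for all `n ≥ 0`. -/
theorem stmt11 (D : ℕ) (hD : 0 < D) (r : ℕ) (F : (Fin r → ℤ) → ℤ)
    (hF : ∀ (q : Fin r → ℤ) (j : Fin r), F (Function.update q j (q j + D)) = F q)
    (ξ : ℂ) (hξ : ξ ^ D = 1)
    (ξD : ℂ) (hξD : ξD = Complex.exp (2 * (Real.pi : ℂ) * Complex.I / D))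
    (S : ℕ → ℂ)
    (hS : ∀ n, S n =
      ∑ q ∈ (Fintype.piFinset fun _ : Fin r => Finset.range (n + 1)).filter
          (fun q => ∑ i, q i ≤ n),
        (∏ i : Fin r, ((n - ∑ j ∈ Finset.Iio i, q j).choose (q i) : ℂ)) *
          ξ ^ F (fun i => (q i : ℤ)))
    (A : Finset (Fin r → ℕ))
    (hA : A = (Fintype.piFinset fun _ : Fin r => Finset.range D).filter
      (fun a => ∀ i i' : Fin r, i ≤ i' → a i' ≤ a i))
    (P : Polynomial ℂ)
    (hP : P = ∏ a ∈ A, (X - C (1 + ∑ i : Fin r, ξD ^ (a i))))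
    (d : ℕ) (hd : d = A.card) :
    (∀ i, ∃ z : ℤ, P.coeff i = (z : ℂ)) ∧
      ∀ n : ℕ, S (n + d) = ∑ m ∈ Finset.range d, (-(P.coeff m)) * S (n + m) := by
  have hprim : IsPrimitiveRoot ξD D := by
    rw [hξD]; exact Complex.isPrimitiveRoot_exp D hD.ne'
  set Cs : Finset (Fin r → ℕ) := Fintype.piFinset fun _ : Fin r => Finset.range D with hCs
  set G : (Fin r → ℕ) → ℂ := fun q => ξ ^ F (fun i => (q i : ℤ)) with hGdef
  have hG : ∀ q, G q = G (fun i => q i % D) := by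
    intro q
    simp only [hGdef]
    rw [Fmod D hD F hF q]
  set lam : (Fin r → ℕ) → ℂ := fun b => 1 + ∑ i, ξD ^ (b i) with hlam
  set β : (Fin r → ℕ) → ℂ := fun b =>
    ∑ c ∈ Cs, G c * ((D : ℂ) ^ r)⁻¹ * ∏ i, (ξD ^ (b i * c i))⁻¹ with hβ
  -- representation
  have hrep : ∀ n, S n = ∑ b ∈ Cs, β b * lam b ^ n := by
    intro n
    rw [hS n]
    have h1 : ∀ q : Fin r → ℕ,
        (∏ i : Fin r, ((n - ∑ j ∈ Finset.Iio i, q j).choose (q i) : ℂ)) *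
            ξ ^ F (fun i => (q i : ℤ))
        = ∑ b ∈ Cs, β b *
            ((∏ i : Fin r, ((n - ∑ j ∈ Finset.Iio i, q j).choose (q i) : ℂ)) *
              ∏ i, (ξD ^ (b i)) ^ (q i)) := by
      intro q
      have := fourier_expand D r hD ξD hprim G hG q
      calc (∏ i : Fin r, ((n - ∑ j ∈ Finset.Iio i, q j).choose (q i) : ℂ)) * G q
          = (∏ i : Fin r, ((n - ∑ j ∈ Finset.Iio i, q j).choose (q i) : ℂ)) *
            ∑ b ∈ Cs, β b * ∏ i, (ξD ^ (b i)) ^ (q i) := by rw [← this]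
        _ = _ := by
            rw [Finset.mul_sum]
            exact Finset.sum_congr rfl fun b _ => by ring
    rw [Finset.sum_congr rfl (fun q _ => h1 q), Finset.sum_comm]
    refine Finset.sum_congr rfl fun b _ => ?_
    rw [← Finset.mul_sum]
    congr 1
    exact multi_thm r n (fun i => ξD ^ (b i))
  -- roots
  have hroot : ∀ b ∈ Cs, P.eval (lam b) = 0 := by
    intro b hb
    have hbD : ∀ i, b i < D := by
      intro i
      have := (Fintype.mem_piFinset.1 hb) i
      simpa using this
    set σ := Tuple.sort b with hσ
    set a : Fin r → ℕ := fun i => b (σ (Fin.rev i)) with ha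
    have haA : a ∈ A := by
      rw [hA, Finset.mem_filter]
      constructor
      · rw [Fintype.mem_piFinset]
        intro i
        simpa using hbD _
      · intro i i' hii'
        have hmono := Tuple.monotone_sort b
        have hrev : Fin.rev i' ≤ Fin.rev i := by
          rw [Fin.rev_le_rev]
          exact hii'
        exact hmono hrev
    have hsum : ∑ i, ξD ^ (a i) = ∑ i, ξD ^ (b i) := by
      have := Equiv.sum_comp ((Fin.revPerm (n := r)).trans σ) (fun j => ξD ^ (b j))
      simpa using this
    rw [hP, eval_prod]
    apply Finset.prod_eq_zero haA
    rw [eval_sub, eval_X, eval_C]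
    have h4 : (1:ℂ) + ∑ i, ξD ^ (a i) = lam b := by
      simp only [hlam]
      rw [hsum]
    rw [h4, sub_self]
  have hmonic : P.Monic := by
    rw [hP]
    exact monic_prod_of_monic _ _ fun a _ => monic_X_sub_C _
  have hdeg : P.natDegree = d := by
    rw [hP, hd, natDegree_prod_of_monic _ _ (fun a _ => monic_X_sub_C _),
      Finset.card_eq_sum_ones]
    exact Finset.sum_congr rfl fun a _ => natDegree_X_sub_C _
  -- recurrence for a single root
  have hrec1 : ∀ lamb : ℂ, P.eval lamb = 0 → ∀ n : ℕ,
      lamb ^ (n + d) = ∑ m ∈ Finset.range d, (-(P.coeff m)) * lamb ^ (n + m) := by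
    intro lamb h0 n
    have heval : P.eval lamb
        = (∑ m ∈ Finset.range d, P.coeff m * lamb ^ m) + lamb ^ d := by
      rw [eval_eq_sum_range, hdeg, Finset.sum_range_succ]
      congr 1
      have : P.coeff d = 1 := by
        have := hmonic.coeff_natDegree
        rwa [hdeg] at this
      rw [this, one_mul]
    have hld : lamb ^ d = -∑ m ∈ Finset.range d, P.coeff m * lamb ^ m := by
      rw [heval] at h0
      linear_combination h0
    calc lamb ^ (n + d) = lamb ^ n * lamb ^ d := by rw [pow_add]
      _ = lamb ^ n * -∑ m ∈ Finset.range d, P.coeff m * lamb ^ m := by rw [hld]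
      _ = ∑ m ∈ Finset.range d, (-(P.coeff m)) * lamb ^ (n + m) := by
          rw [← Finset.sum_neg_distrib, Finset.mul_sum]
          exact Finset.sum_congr rfl fun m _ => by rw [pow_add]; ring
  constructor
  · exact intCoeffs D hD r ξD hprim A hA P hP
  · intro n
    rw [hrep (n + d)]
    have hR : ∑ m ∈ Finset.range d, (-(P.coeff m)) * S (n + m)
        = ∑ m ∈ Finset.range d, ∑ b ∈ Cs, (-(P.coeff m)) * (β b * lam b ^ (n + m)) := by
      refine Finset.sum_congr rfl fun m _ => ?_
      rw [hrep (n + m), Finset.mul_sum]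
    rw [hR, Finset.sum_comm]
    refine Finset.sum_congr rfl fun b hb => ?_
    rw [hrec1 (lam b) (hroot b hb) n, Finset.mul_sum]
    exact Finset.sum_congr rfl fun m _ => by ring
end
end
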